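/- arXiv:1702.00622 — 3 statements merged into one kernel-verified Lean document; each statement's English description precedes it below -/
import Mathlib

section
/- Let G be an imperfect (P4 ∪ K1, C4)-free graph. Then G is connected and there exists a partition (V1, V2, V3) of the vertex set of G such that V1 induces a P4-free subgraph of G, and V2 and V3 are cliques of G. -/
open SimpleGraph

/-- `G` contains no induced subgraph isomorphic to `H` (graph embeddings are
exactly the inclusions of induced subgraphs). -/
def IndFree {W V : Type*} (H : SimpleGraph W) (G : SimpleGraph V) : Prop :=
  IsEmpty (H ↪g G)

/-- A set of vertices is independent if its elements are pairwise nonadjacent. -/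
def IsIndep {V : Type*} (G : SimpleGraph V) (s : Set V) : Prop :=
  s.Pairwise fun u v => ¬ G.Adj u v

/-- A graph is perfect if every induced subgraph has chromatic number equal to
its clique number. -/
def IsPerfect {V : Type*} (G : SimpleGraph V) : Prop :=
  ∀ S : Set V, (G.induce S).chromaticNumber = ((G.induce S).cliqueNum : ℕ∞)

/-- `2K₂`: two disjoint edges `{0,1}` and `{2,3}`. -/
def graph2K2 : SimpleGraph (Fin 4) :=
  SimpleGraph.fromRel (fun a b => (a = 0 ∧ b = 1) ∨ (a = 2 ∧ b = 3))

/-- The path `P₄`. -/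
def graphP4 : SimpleGraph (Fin 4) :=
  SimpleGraph.fromRel (fun a b => (a = 0 ∧ b = 1) ∨ (a = 1 ∧ b = 2) ∨ (a = 2 ∧ b = 3))

/-- The path `P₃`. -/
def graphP3 : SimpleGraph (Fin 3) :=
  SimpleGraph.fromRel (fun a b => (a = 0 ∧ b = 1) ∨ (a = 1 ∧ b = 2))

/-- `P₄ ∪ K₁`: a path on `{0,1,2,3}` plus the isolated vertex `4`. -/
def graphP4K1 : SimpleGraph (Fin 5) :=
  SimpleGraph.fromRel (fun a b => (a = 0 ∧ b = 1) ∨ (a = 1 ∧ b = 2) ∨ (a = 2 ∧ b = 3))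

/-- The cycle `C₄`. -/
def graphC4 : SimpleGraph (Fin 4) :=
  SimpleGraph.fromRel
    (fun a b => (a = 0 ∧ b = 1) ∨ (a = 1 ∧ b = 2) ∨ (a = 2 ∧ b = 3) ∨ (a = 3 ∧ b = 0))

/-- The gem `K₁ + P₄`: a path on `{0,1,2,3}` plus the universal vertex `4`. -/
def graphGem : SimpleGraph (Fin 5) :=
  SimpleGraph.fromRel
    (fun a b => (a = 0 ∧ b = 1) ∨ (a = 1 ∧ b = 2) ∨ (a = 2 ∧ b = 3) ∨ (a ≠ 4 ∧ b = 4))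

/-- The wheel `K₁ + C₄`: a 4-cycle on `{0,1,2,3}` plus the universal vertex `4`. -/
def graphWheel : SimpleGraph (Fin 5) :=
  SimpleGraph.fromRel
    (fun a b => (a = 0 ∧ b = 1) ∨ (a = 1 ∧ b = 2) ∨ (a = 2 ∧ b = 3) ∨ (a = 3 ∧ b = 0) ∨
      (a ≠ 4 ∧ b = 4))

/-- `P₂ ∪ P₃`: the edge `{0,1}` together with the path `2 - 3 - 4`. -/
def graphP2P3 : SimpleGraph (Fin 5) :=
  SimpleGraph.fromRel (fun a b => (a = 0 ∧ b = 1) ∨ (a = 2 ∧ b = 3) ∨ (a = 3 ∧ b = 4))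

/-- `P₂ ∪ P₄`: the edge `{0,1}` together with the path `2 - 3 - 4 - 5`. -/
def graphP2P4 : SimpleGraph (Fin 6) :=
  SimpleGraph.fromRel
    (fun a b => (a = 0 ∧ b = 1) ∨ (a = 2 ∧ b = 3) ∨ (a = 3 ∧ b = 4) ∨ (a = 4 ∧ b = 5))

/-- `HVN`: `K₄` on `{0,1,2,3}` plus a vertex `4` adjacent to exactly `0` and `1`. -/
def graphHVN : SimpleGraph (Fin 5) :=
  SimpleGraph.fromRel (fun a b => (a < 4 ∧ b < 4) ∨ (a = 4 ∧ (b = 0 ∨ b = 1)))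

/-- `K₅ - e`: the complete graph on 5 vertices minus the edge `{0,1}`. -/
def graphK5e : SimpleGraph (Fin 5) :=
  SimpleGraph.fromRel (fun a b => ¬((a = 0 ∧ b = 1) ∨ (a = 1 ∧ b = 0)))

/-- The diamond `K₄ - e`: the complete graph on 4 vertices minus the edge `{0,2}`. -/
def graphDiamond : SimpleGraph (Fin 4) :=
  SimpleGraph.fromRel (fun a b => ¬((a = 0 ∧ b = 2) ∨ (a = 2 ∧ b = 0)))

/-- The paw: a triangle `{0,1,2}` plus a pendant vertex `3` adjacent to `0`. -/
def graphPaw : SimpleGraph (Fin 4) :=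
  SimpleGraph.fromRel
    (fun a b => (a = 0 ∧ b = 1) ∨ (a = 1 ∧ b = 2) ∨ (a = 0 ∧ b = 2) ∨ (a = 0 ∧ b = 3))

/-- `K₅`. -/
def graphK5 : SimpleGraph (Fin 5) := ⊤

/-- The join `K₁ + H`: `H` together with a new universal vertex `none`. -/
def joinK1 {W : Type*} (H : SimpleGraph W) : SimpleGraph (Option W) :=
  SimpleGraph.fromRel
    (fun a b => (∃ u v, a = some u ∧ b = some v ∧ H.Adj u v) ∨ a = none)

/-- A pseudo-split graph is a `(2K₂, C₄)`-free graph. -/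
def IsPseudoSplit {V : Type*} (G : SimpleGraph V) : Prop :=
  IndFree graph2K2 G ∧ IndFree graphC4 G

section Main

open SimpleGraph

universe u

variable {V : Type u} {G : SimpleGraph V}

/-- `a-b-c-d` is an induced path. -/
def P4pat (G : SimpleGraph V) (a b c d : V) : Prop :=
  G.Adj a b ∧ G.Adj b c ∧ G.Adj c d ∧ ¬G.Adj a c ∧ ¬G.Adj a d ∧ ¬G.Adj b d ∧
    a ≠ c ∧ a ≠ d ∧ b ≠ d

/-- `a-b-c-d-a` is an induced 4-cycle. -/
def C4pat (G : SimpleGraph V) (a b c d : V) : Prop :=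
  G.Adj a b ∧ G.Adj b c ∧ G.Adj c d ∧ G.Adj d a ∧ ¬G.Adj a c ∧ ¬G.Adj b d ∧ a ≠ c ∧ b ≠ d

lemma P4pat_of_emb (f : graphP4 ↪g G) : P4pat G (f 0) (f 1) (f 2) (f 3) := by
  have hA : ∀ i j : Fin 4, graphP4.Adj i j → G.Adj (f i) (f j) := fun i j h => f.map_rel_iff.2 h
  have hN : ∀ i j : Fin 4, ¬graphP4.Adj i j → ¬G.Adj (f i) (f j) := fun i j h hc =>
    h (f.map_rel_iff.1 hc)
  refine ⟨hA 0 1 ?_, hA 1 2 ?_, hA 2 3 ?_, hN 0 2 ?_, hN 0 3 ?_, hN 1 3 ?_,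
    fun h => ?_, fun h => ?_, fun h => ?_⟩ <;>
    first
      | (simp only [graphP4, SimpleGraph.fromRel_adj]; decide)
      | (have := f.injective h; simp_all)

set_option linter.unreachableTactic false in
set_option linter.unusedTactic false in
lemma emb_of_P4pat {a b c d : V} (h : P4pat G a b c d) : Nonempty (graphP4 ↪g G) := by
  obtain ⟨h1, h2, h3, n1, n2, n3, d1, d2, d3⟩ := h
  have hab := h1.ne; have hbc := h2.ne; have hcd := h3.ne
  refine ⟨⟨⟨![a,b,c,d], ?_⟩, ?_⟩⟩
  · intro i j hij
    fin_cases i <;> fin_cases j <;> simp_all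
  · intro i j
    fin_cases i <;> fin_cases j <;>
      simp only [Function.Embedding.coeFn_mk, Matrix.cons_val', Matrix.cons_val_zero,
        Matrix.cons_val_one, Matrix.head_cons, Matrix.cons_val_two, Matrix.tail_cons,
        Matrix.cons_val_three, graphP4, SimpleGraph.fromRel_adj] <;>
      constructor <;> intro hh <;>
      first
        | exact absurd hh (G.irrefl)
        | decide
        | tauto

set_option linter.unreachableTactic false in
set_option linter.unusedTactic false in
lemma emb_of_C4pat {a b c d : V} (h : C4pat G a b c d) : Nonempty (graphC4 ↪g G) := by
  obtain ⟨h1, h2, h3, h4, n1, n2, d1, d2⟩ := h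
  have hab := h1.ne; have hbc := h2.ne; have hcd := h3.ne; have hda := h4.ne
  refine ⟨⟨⟨![a,b,c,d], ?_⟩, ?_⟩⟩
  · intro i j hij
    fin_cases i <;> fin_cases j <;> simp_all <;> tauto
  · intro i j
    fin_cases i <;> fin_cases j <;>
      simp only [Function.Embedding.coeFn_mk, Matrix.cons_val', Matrix.cons_val_zero,
        Matrix.cons_val_one, Matrix.head_cons, Matrix.cons_val_two, Matrix.tail_cons,
        Matrix.cons_val_three, graphC4, SimpleGraph.fromRel_adj] <;>
      constructor <;> intro hh <;>
      first
        | exact absurd hh (G.irrefl)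
        | decide
        | tauto

set_option linter.unreachableTactic false in
set_option linter.unusedTactic false in
set_option maxHeartbeats 1000000 in
lemma emb_of_P4K1pat {a b c d x : V} (h : P4pat G a b c d)
    (na : ¬G.Adj x a) (nb : ¬G.Adj x b) (nc : ¬G.Adj x c) (nd : ¬G.Adj x d)
    (ea : x ≠ a) (eb : x ≠ b) (ec : x ≠ c) (ed : x ≠ d) :
    Nonempty (graphP4K1 ↪g G) := by
  obtain ⟨h1, h2, h3, n1, n2, n3, d1, d2, d3⟩ := h
  have hab := h1.ne; have hbc := h2.ne; have hcd := h3.ne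
  refine ⟨⟨⟨![a,b,c,d,x], ?_⟩, ?_⟩⟩
  · intro i j hij
    fin_cases i <;> fin_cases j <;> simp_all
  · intro i j
    fin_cases i <;> fin_cases j <;>
      simp only [Function.Embedding.coeFn_mk, Matrix.cons_val', Matrix.cons_val_zero,
        Matrix.cons_val_one, Matrix.head_cons, Matrix.cons_val_two, Matrix.tail_cons,
        Matrix.cons_val_three, Matrix.cons_val_four, Matrix.cons_val_fin_one,
        graphP4K1, SimpleGraph.fromRel_adj] <;>
      constructor <;> intro hh <;>
      first
        | exact absurd hh (G.irrefl)
        | decide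
        | tauto
        | (exact absurd (hh.symm) (by tauto))

def P4freeG (G : SimpleGraph V) : Prop := ∀ a b c d, ¬P4pat G a b c d
def C4freeG (G : SimpleGraph V) : Prop := ∀ a b c d, ¬C4pat G a b c d

lemma P4freeG_induce (hp : P4freeG G) (S : Set V) : P4freeG (G.induce S) := by
  rintro a b c d ⟨h1, h2, h3, n1, n2, n3, d1, d2, d3⟩
  exact hp a b c d ⟨h1, h2, h3, n1, n2, n3,
    fun h => d1 (Subtype.ext h), fun h => d2 (Subtype.ext h), fun h => d3 (Subtype.ext h)⟩

lemma C4freeG_induce (hc : C4freeG G) (S : Set V) : C4freeG (G.induce S) := by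
  rintro a b c d ⟨h1, h2, h3, h4, n1, n2, d1, d2⟩
  exact hc a b c d ⟨h1, h2, h3, h4, n1, n2,
    fun h => d1 (Subtype.ext h), fun h => d2 (Subtype.ext h)⟩

lemma card_set_lt_of_not_mem {W : Type u} [Fintype W] {S : Set W} [Fintype S] {x : W}
    (hx : x ∉ S) : Fintype.card S < Fintype.card W := by
  refine Fintype.card_lt_of_injective_of_notMem Subtype.val Subtype.val_injective (b := x) ?_
  rintro ⟨⟨y, hy⟩, rfl⟩
  exact hx hy

lemma cliqueNum_induce_le [Fintype V] (S : Set V) : (G.induce S).cliqueNum ≤ G.cliqueNum := by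
  classical
  obtain ⟨s, hs⟩ := (G.induce S).exists_isNClique_cliqueNum
  have hcl : G.IsClique (s.image Subtype.val) := by
    intro u hu v hv huv
    simp only [Finset.coe_image, Set.mem_image, Finset.mem_coe] at hu hv
    obtain ⟨u', hu', rfl⟩ := hu
    obtain ⟨v', hv', rfl⟩ := hv
    exact hs.1 hu' hv' (fun h => huv (congrArg Subtype.val h))
  have hcard : (s.image Subtype.val).card = (G.induce S).cliqueNum := by
    rw [Finset.card_image_of_injective _ Subtype.val_injective, hs.2]
  calc (G.induce S).cliqueNum = (s.image Subtype.val).card := hcard.symm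
    _ ≤ G.cliqueNum := IsClique.card_le_cliqueNum (tc := hcl)

theorem TPcolor : ∀ (n : ℕ) {W : Type u} [Fintype W] (H : SimpleGraph W),
    Fintype.card W ≤ n → P4freeG H → C4freeG H → H.Colorable H.cliqueNum := by
  intro n
  induction n with
  | zero =>
    intro W _ H hcard _ _
    haveI : IsEmpty W := Fintype.card_eq_zero_iff.1 (Nat.le_zero.1 hcard)
    exact (Colorable.of_isEmpty (G := H) 0).mono (Nat.zero_le _)
  | succ n IH =>
    intro W _ H hcard hp hc
    classical
    by_cases hne : Nonempty W
    swap
    · haveI : IsEmpty W := not_nonempty_iff.1 hne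
      exact (Colorable.of_isEmpty (G := H) 0).mono (Nat.zero_le _)
    obtain ⟨x, -, hx⟩ := Finset.exists_max_image Finset.univ (fun v => H.degree v)
      (Finset.univ_nonempty)
    by_cases huniv : ∀ y, y ≠ x → H.Adj x y
    · -- x is universal
      set S : Set W := {x}ᶜ with hS
      have hxS : ¬(x ∈ S) := by simp [hS]
      have hcS : Fintype.card S ≤ n := by
        have := card_set_lt_of_not_mem hxS
        omega
      have hcol := IH (H.induce S) hcS (P4freeG_induce hp S) (C4freeG_induce hc S)
      obtain ⟨C'⟩ := hcol
      set m := (H.induce S).cliqueNum with hm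
      have hcol2 : H.Colorable (m + 1) := by
        refine ⟨Coloring.mk
          (fun v => if h : v = x then Fin.last m else (C' ⟨v, h⟩).castSucc) ?_⟩
        intro u v huv
        by_cases hu : u = x <;> by_cases hv : v = x
        · exact absurd (hu ▸ hv ▸ huv) (H.irrefl)
        · simp only [hu, dif_pos, dif_neg hv]
          exact (Fin.castSucc_lt_last _).ne'
        · simp only [hv, dif_pos, dif_neg hu]
          exact (Fin.castSucc_lt_last _).ne
        · simp only [dif_neg hu, dif_neg hv]
          intro hEq
          exact C'.valid (by exact huv) (Fin.castSucc_injective _ hEq)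
      refine hcol2.mono ?_
      obtain ⟨s, hs⟩ := (H.induce S).exists_isNClique_cliqueNum
      have hxim : x ∉ s.image Subtype.val := by
        simp only [Finset.mem_image]
        rintro ⟨u, -, hux⟩
        exact hxS (hux ▸ u.2)
      have hcl : H.IsClique (insert x (s.image Subtype.val) : Finset W) := by
        intro u hu v hv huv
        simp only [Finset.coe_insert, Set.mem_insert_iff, Finset.coe_image, Set.mem_image,
          Finset.mem_coe] at hu hv
        rcases hu with rfl | ⟨u', hu', rfl⟩
        · rcases hv with rfl | ⟨v', hv', rfl⟩
          · exact absurd rfl huv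
          · exact huniv _ (fun h => hxS (h ▸ v'.2))
        · rcases hv with rfl | ⟨v', hv', rfl⟩
          · exact (huniv _ (fun h => hxS (h ▸ u'.2))).symm
          · exact hs.1 hu' hv' (fun h => huv (congrArg Subtype.val h))
      have hcard2 : (insert x (s.image Subtype.val) : Finset W).card = m + 1 := by
        rw [Finset.card_insert_of_notMem hxim,
          Finset.card_image_of_injective _ Subtype.val_injective, hs.2]
      calc m + 1 = (insert x (s.image Subtype.val) : Finset W).card := hcard2.symm
        _ ≤ H.cliqueNum := IsClique.card_le_cliqueNum (tc := hcl)
    · -- G is disconnected along N[x]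
      push_neg at huniv
      obtain ⟨y₀, hy₀x, hy₀⟩ := huniv
      set T : Set W := {y | y = x ∨ H.Adj x y} with hT
      have hxT : x ∈ T := Or.inl rfl
      have hy₀T : y₀ ∉ T := by
        rintro (h | h)
        exacts [hy₀x h, hy₀ h]
      have hcross : ∀ s t, s ∈ T → t ∉ T → ¬H.Adj s t := by
        rintro s t hs ht hadj
        have htx : t ≠ x := fun h => ht (h ▸ hxT)
        have hxt : ¬H.Adj x t := fun h => ht (Or.inr h)
        rcases hs with rfl | hs
        · exact hxt hadj
        have hdom : ∀ w, H.Adj x w → w ≠ s → H.Adj s w := by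
          intro w hw hws
          by_contra hns
          by_cases hwt : H.Adj w t
          · exact hc x w t s ⟨hw, hwt, hadj.symm, hs.symm, hxt,
              fun h => hns h.symm, htx.symm, hws⟩
          · refine hp w x s t ⟨hw.symm, hs, hadj,
              fun h => hns h.symm, hwt, hxt, hws, ?_, htx.symm⟩
            intro h
            exact hxt (h ▸ hw)
        have hsub : (H.neighborFinset x).erase s ∪ {x, t} ⊆ H.neighborFinset s := by
          intro u hu
          rw [Finset.mem_union] at hu
          rcases hu with hu | hu
          · rw [Finset.mem_erase, mem_neighborFinset] at hu
            exact (mem_neighborFinset _ _ _).2 (hdom u hu.2 hu.1)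
          · simp only [Finset.mem_insert, Finset.mem_singleton] at hu
            rcases hu with rfl | rfl
            · exact (mem_neighborFinset _ _ _).2 hs.symm
            · exact (mem_neighborFinset _ _ _).2 hadj
        have hcard1 : ((H.neighborFinset x).erase s).card = H.degree x - 1 := by
          rw [Finset.card_erase_of_mem ((mem_neighborFinset _ _ _).2 hs)]
          rfl
        have hxmem : x ∉ (H.neighborFinset x).erase s := by
          simp [mem_neighborFinset]
        have htmem : t ∉ (H.neighborFinset x).erase s := by
          simp only [Finset.mem_erase, mem_neighborFinset]
          tauto
        have hdisj : Disjoint ((H.neighborFinset x).erase s) {x, t} := by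
          simp only [Finset.disjoint_insert_right, Finset.disjoint_singleton_right]
          exact ⟨hxmem, htmem⟩
        have hcard2 : (({x, t} : Finset W)).card = 2 := by
          rw [Finset.card_insert_of_notMem (by simpa using htx.symm), Finset.card_singleton]
        have hdeg1 : 1 ≤ H.degree x := by
          rw [← card_neighborFinset_eq_degree]
          exact Finset.card_pos.2 ⟨s, (mem_neighborFinset _ _ _).2 hs⟩
        have hmain := Finset.card_le_card hsub
        rw [Finset.card_union_of_disjoint hdisj, hcard1, hcard2,
          card_neighborFinset_eq_degree] at hmain
        have hle := hx s (Finset.mem_univ s)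
        omega
      have hcT : Fintype.card T ≤ n := by
        have := card_set_lt_of_not_mem hy₀T
        omega
      have hcTc : Fintype.card (Tᶜ : Set W) ≤ n := by
        have := card_set_lt_of_not_mem (S := (Tᶜ : Set W)) (x := x) (by simp [hxT])
        omega
      have h1 := (IH (H.induce T) hcT (P4freeG_induce hp T) (C4freeG_induce hc T)).mono
        (_root_.cliqueNum_induce_le T)
      have h2 := (IH (H.induce (Tᶜ : Set W)) hcTc (P4freeG_induce hp _)
        (C4freeG_induce hc _)).mono (_root_.cliqueNum_induce_le _)
      obtain ⟨C1⟩ := h1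
      obtain ⟨C2⟩ := h2
      refine ⟨Coloring.mk (fun v => if h : v ∈ T then C1 ⟨v, h⟩ else C2 ⟨v, h⟩) ?_⟩
      intro u v huv
      by_cases hu : u ∈ T <;> by_cases hv : v ∈ T
      · simp only [dif_pos hu, dif_pos hv]
        exact fun hEq => C1.valid (show (H.induce T).Adj ⟨u, hu⟩ ⟨v, hv⟩ from huv) hEq
      · exact absurd huv (hcross u v hu hv)
      · exact absurd huv.symm (hcross v u hv hu)
      · simp only [dif_neg hu, dif_neg hv]
        exact fun hEq =>
          C2.valid (show (H.induce (Tᶜ : Set W)).Adj ⟨u, hu⟩ ⟨v, hv⟩ from huv) hEq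

theorem TPchrom {W : Type u} [Fintype W] (H : SimpleGraph W) (hp : P4freeG H)
    (hc : C4freeG H) : H.chromaticNumber = (H.cliqueNum : ℕ∞) := by
  refine le_antisymm ((TPcolor (Fintype.card W) H le_rfl hp hc).chromaticNumber_le) ?_
  obtain ⟨s, hs⟩ := H.exists_isNClique_cliqueNum
  have := hs.1.card_le_chromaticNumber
  rw [hs.2] at this
  exact this

theorem perfect_of_P4C4free [Fintype V] (G : SimpleGraph V) (hp : P4freeG G)
    (hc : C4freeG G) : IsPerfect G := by
  intro S
  classical
  exact TPchrom _ (P4freeG_induce hp S) (C4freeG_induce hc S)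

end Main

/-- Every imperfect `(P₄ ∪ K₁, C₄)`-free graph is connected and its
vertex set can be partitioned into `V₁, V₂, V₃` with `V₁` inducing a `P₄`-free
subgraph and `V₂`, `V₃` cliques. -/
theorem stmt0 {V : Type*} [Fintype V] (G : SimpleGraph V)
    (h1 : IndFree graphP4K1 G) (h2 : IndFree graphC4 G)
    (himp : ¬ IsPerfect G) :
    G.Connected ∧
      ∃ V1 V2 V3 : Set V,
        V1 ∪ V2 ∪ V3 = (Set.univ : Set V) ∧
        Disjoint V1 V2 ∧ Disjoint V1 V3 ∧ Disjoint V2 V3 ∧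
        IndFree graphP4 (G.induce V1) ∧
        G.IsClique V2 ∧ G.IsClique V3 := by
  classical
  have hC4 : C4freeG G := fun a b c d hp => h2.false (emb_of_C4pat hp).some
  have hP4K1 : ∀ {a b c d x : V}, P4pat G a b c d → ¬G.Adj x a → ¬G.Adj x b → ¬G.Adj x c →
      ¬G.Adj x d → x ≠ a → x ≠ b → x ≠ c → x ≠ d → False := by
    intro a b c d x hp na nb nc nd ea eb ec ed
    exact h1.false (emb_of_P4K1pat hp na nb nc nd ea eb ec ed).some
  by_cases hex : ∃ p q r s, P4pat G p q r s
  case neg =>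
    push_neg at hex
    exact absurd (perfect_of_P4C4free G (fun a b c d hp => hex a b c d hp) hC4) himp
  case pos =>
  obtain ⟨p0, q0, r0, s0, hp0⟩ := hex
  set E : Finset V := Finset.univ.filter (fun t => ∃ p q r, P4pat G t p q r) with hE
  have hEne : E.Nonempty := ⟨p0, by
    rw [hE, Finset.mem_filter]
    exact ⟨Finset.mem_univ _, q0, r0, s0, hp0⟩⟩
  obtain ⟨z, hzE, hzmin⟩ := Finset.exists_min_image E (fun v => G.degree v) hEne
  obtain ⟨a, b, c, hzP⟩ := (Finset.mem_filter.1 hzE).2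
  obtain ⟨hza, hab, hbc, nzb, nzc, nac, dzb, dzc, dac⟩ := hzP
  -- Lemma K1 : vertices of N(z) with all neighbours in N[z] are P4-endpoints
  have hK1 : ∀ t, G.Adj z t → (∀ u, G.Adj t u → u = z ∨ G.Adj z u) → t ∈ E := by
    intro t hzt hsub
    have htb : ¬G.Adj t b := fun h => (hsub b h).elim (fun h' => dzb h'.symm) nzb
    have htc : ¬G.Adj t c := fun h => (hsub c h).elim (fun h' => dzc h'.symm) nzc
    have hta' : t ≠ a := fun h => htb (h ▸ hab)
    have htb' : t ≠ b := fun h => nzb (h ▸ hzt)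
    have htc' : t ≠ c := fun h => nzc (h ▸ hzt)
    rw [hE, Finset.mem_filter]
    refine ⟨Finset.mem_univ t, ?_⟩
    by_cases hta : G.Adj t a
    · exact ⟨a, b, c, hta, hab, hbc, htb, htc, nac, htb', htc', dac⟩
    · exact ⟨z, a, b, hzt.symm, hza, hab, hta, htb, nzb, hta', htb', dzb⟩
  -- Lemma K2 : such vertices (with two non-neighbours in N(z)) have smaller degree
  have hK2 : ∀ t u v, G.Adj z t → G.Adj z u → G.Adj z v → t ≠ u → t ≠ v → u ≠ v →
      ¬G.Adj t u → ¬G.Adj t v → (∀ w, G.Adj t w → w = z ∨ G.Adj z w) →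
      G.degree t < G.degree z := by
    intro t u v hzt hzu hzv htu htv huv ntu ntv hsub
    have hsub2 : G.neighborFinset t ⊆ (insert z (G.neighborFinset z)) \ {t, u, v} := by
      intro w hw
      rw [mem_neighborFinset] at hw
      rw [Finset.mem_sdiff, Finset.mem_insert, mem_neighborFinset]
      refine ⟨hsub w hw, ?_⟩
      simp only [Finset.mem_insert, Finset.mem_singleton]
      push_neg
      exact ⟨fun h => G.irrefl (h ▸ hw), fun h => ntu (h ▸ hw), fun h => ntv (h ▸ hw)⟩
    have htuv_sub : ({t, u, v} : Finset V) ⊆ insert z (G.neighborFinset z) := by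
      intro w hw
      simp only [Finset.mem_insert, Finset.mem_singleton] at hw
      rcases hw with rfl | rfl | rfl
      · exact Finset.mem_insert_of_mem ((mem_neighborFinset _ _ _).2 hzt)
      · exact Finset.mem_insert_of_mem ((mem_neighborFinset _ _ _).2 hzu)
      · exact Finset.mem_insert_of_mem ((mem_neighborFinset _ _ _).2 hzv)
    have hcard3 : ({t, u, v} : Finset V).card = 3 := by
      rw [Finset.card_insert_of_notMem (by simp [htu, htv]),
        Finset.card_insert_of_notMem (by simp [huv]), Finset.card_singleton]
    have hcardIns : (insert z (G.neighborFinset z)).card = G.degree z + 1 := by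
      rw [Finset.card_insert_of_notMem (by simp), card_neighborFinset_eq_degree]
    have h1' := Finset.card_le_card hsub2
    rw [Finset.card_sdiff_of_subset htuv_sub, hcardIns, hcard3, card_neighborFinset_eq_degree] at h1'
    have h2' := Finset.card_le_card htuv_sub
    rw [hcardIns, hcard3] at h2'
    omega
  -- descent: every vertex of N(z) with two non-neighbours in N(z) has a neighbour outside N[z]
  have hout : ∀ t u v, G.Adj z t → G.Adj z u → G.Adj z v → t ≠ u → t ≠ v → u ≠ v →
      ¬G.Adj t u → ¬G.Adj t v → ∃ w, G.Adj t w ∧ w ≠ z ∧ ¬G.Adj z w := by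
    intro t u v hzt hzu hzv htu htv huv ntu ntv
    by_contra hcon
    push_neg at hcon
    have hsub : ∀ w, G.Adj t w → w = z ∨ G.Adj z w := fun w hw =>
      or_iff_not_imp_left.2 (fun h => hcon w hw h)
    have h1' := hK2 t u v hzt hzu hzv htu htv huv ntu ntv hsub
    have h2' := hzmin t (hK1 t hzt hsub)
    omega
  -- M1 : N(z) contains no independent triple
  have hM1 : ∀ u v w, G.Adj z u → G.Adj z v → G.Adj z w → u ≠ v → u ≠ w → v ≠ w →
      ¬G.Adj u v → ¬G.Adj u w → ¬G.Adj v w → False := by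
    intro u v w hzu hzv hzw duv duw dvw nuv nuw nvw
    obtain ⟨xu, huxu, hxuz, hzxu⟩ := hout u v w hzu hzv hzw duv duw dvw nuv nuw
    obtain ⟨xv, hvxv, hxvz, hzxv⟩ := hout v u w hzv hzu hzw (Ne.symm duv) dvw duw
      (fun h => nuv h.symm) nvw
    obtain ⟨xw, hwxw, hxwz, hzxw⟩ := hout w u v hzw hzu hzv (Ne.symm duw) (Ne.symm dvw) duv
      (fun h => nuw h.symm) (fun h => nvw h.symm)
    have cross : ∀ t s xt, G.Adj z t → G.Adj z s → G.Adj t xt → ¬G.Adj z xt → xt ≠ z →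
        ¬G.Adj t s → t ≠ s → ¬G.Adj xt s := by
      intro t s xt hzt hzs htxt hzxt hxtz nts dts hcon2
      exact hC4 t xt s z ⟨htxt, hcon2, hzs.symm, hzt, nts, fun h => hzxt h.symm, dts, hxtz⟩
    have nxuv := cross u v xu hzu hzv huxu hzxu hxuz nuv duv
    have nxuw := cross u w xu hzu hzw huxu hzxu hxuz nuw duw
    have nxvu := cross v u xv hzv hzu hvxv hzxv hxvz (fun h => nuv h.symm) (Ne.symm duv)
    have nxvw := cross v w xv hzv hzw hvxv hzxv hxvz nvw dvw
    have nxwu := cross w u xw hzw hzu hwxw hzxw hxwz (fun h => nuw h.symm) (Ne.symm duw)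
    have nxwv := cross w v xw hzw hzv hwxw hzxw hxwz (fun h => nvw h.symm) (Ne.symm dvw)
    have hp1 : P4pat G xu u z v :=
      ⟨huxu.symm, hzu.symm, hzv, fun h => hzxu h.symm, nxuv, nuv, hxuz,
        fun h => nuv (h ▸ huxu), duv⟩
    have exwxu : G.Adj xw xu := by
      by_contra hcon2
      exact hP4K1 hp1 hcon2 nxwu (fun h => hzxw h.symm) nxwv
        (fun h => nxuw ((h ▸ hwxw).symm)) (fun h => nuw ((h ▸ hwxw).symm)) hxwz
        (fun h => nvw ((h ▸ hwxw).symm))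
    have hp2 : P4pat G xu u z w :=
      ⟨huxu.symm, hzu.symm, hzw, fun h => hzxu h.symm, nxuw, nuw, hxuz,
        fun h => nuw (h ▸ huxu), duw⟩
    have exvxu : G.Adj xv xu := by
      by_contra hcon2
      exact hP4K1 hp2 hcon2 nxvu (fun h => hzxv h.symm) nxvw
        (fun h => nxuv ((h ▸ hvxv).symm)) (fun h => nuv ((h ▸ hvxv).symm)) hxvz
        (fun h => nvw (h ▸ hvxv))
    have hp3 : P4pat G u xu xv v :=
      ⟨huxu, exvxu.symm, hvxv.symm, fun h => nxvu h.symm, nuv, nxuv,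
        fun h => nuv ((h ▸ hvxv).symm), duv, fun h => nuv (h ▸ huxu)⟩
    exact hP4K1 hp3 (fun h => nuw h.symm) (fun h => nxuw h.symm) (fun h => nxvw h.symm)
      (fun h => nvw h.symm) (Ne.symm duw) (fun h => hzxu (by rw [← h]; exact hzw))
      (fun h => hzxv (by rw [← h]; exact hzw)) (Ne.symm dvw)
  -- core of M2
  have hcore : ∀ d1 d2 d3 d4 d5 x : V,
      G.Adj z d1 → G.Adj z d2 → G.Adj z d3 → G.Adj z d4 → G.Adj z d5 →
      G.Adj d1 d2 → G.Adj d2 d3 → G.Adj d3 d4 → G.Adj d4 d5 → G.Adj d5 d1 →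
      ¬G.Adj d1 d3 → ¬G.Adj d1 d4 → ¬G.Adj d2 d4 → ¬G.Adj d2 d5 → ¬G.Adj d3 d5 →
      d1 ≠ d3 → d1 ≠ d4 → d2 ≠ d4 → d2 ≠ d5 → d3 ≠ d5 →
      G.Adj x d1 → G.Adj x d2 → ¬G.Adj x d3 → ¬G.Adj x d4 → ¬G.Adj x d5 →
      ¬G.Adj z x → x ≠ z → False := by
    intro d1 d2 d3 d4 d5 x hz1 hz2 hz3 hz4 hz5 e12 e23 e34 e45 e51 n13 n14 n24 n25 n35
      q13 q14 q24 q25 q35 a1 a2 na3 na4 na5 nzx hxz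
    obtain ⟨y, h4y, hyz, hzy⟩ := hout d4 d1 d2 hz4 hz1 hz2 (Ne.symm q14) (Ne.symm q24)
      e12.ne (fun h => n14 h.symm) (fun h => n24 h.symm)
    have ny1 : ¬G.Adj y d1 := fun h =>
      hC4 d1 y d4 z ⟨h.symm, h4y.symm, hz4.symm, hz1, n14, fun hh => hzy hh.symm, q14, hyz⟩
    have ny2 : ¬G.Adj y d2 := fun h =>
      hC4 d2 y d4 z ⟨h.symm, h4y.symm, hz4.symm, hz2, n24, fun hh => hzy hh.symm, q24, hyz⟩
    have hy35 : G.Adj y d3 ∨ G.Adj y d5 := by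
      by_contra hcon2
      push_neg at hcon2
      exact hP4K1 (show P4pat G d5 d1 d2 d3 from
          ⟨e51, e12, e23, fun h => n25 h.symm, fun h => n35 h.symm, n13,
            Ne.symm q25, Ne.symm q35, q13⟩)
        hcon2.2 ny1 ny2 hcon2.1 (fun h => hzy (by rw [h]; exact hz5))
        (fun h => hzy (by rw [h]; exact hz1)) (fun h => hzy (by rw [h]; exact hz2))
        (fun h => hzy (by rw [h]; exact hz3))
    rcases hy35 with hy3 | hy5
    · have ny5 : ¬G.Adj y d5 := fun h =>
        hC4 d3 y d5 z ⟨hy3.symm, h, hz5.symm, hz3, n35, fun hh => hzy hh.symm, q35, hyz⟩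
      have hxy : G.Adj x y := by
        by_contra hcon2
        exact hP4K1 (show P4pat G x d2 d3 y from
            ⟨a2, e23, hy3.symm, na3, hcon2, fun h => ny2 h.symm,
              fun h => nzx (by rw [h]; exact hz3),
              fun h => na4 (by rw [h]; exact h4y.symm),
              fun h => hzy (by rw [← h]; exact hz2)⟩)
          (fun h => na5 h.symm) (fun h => n25 h.symm) (fun h => n35 h.symm)
          (fun h => ny5 h.symm) (fun h => nzx (by rw [← h]; exact hz5)) (Ne.symm q25)
          (Ne.symm q35) (fun h => hzy (by rw [← h]; exact hz5))
      exact hC4 x y d3 d2 ⟨hxy, hy3, e23.symm, a2.symm, na3, ny2,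
        fun h => nzx (by rw [h]; exact hz3), fun h => hzy (by rw [h]; exact hz2)⟩
    · have ny3 : ¬G.Adj y d3 := fun h =>
        hC4 d3 y d5 z ⟨h.symm, hy5, hz5.symm, hz3, n35, fun hh => hzy hh.symm, q35, hyz⟩
      have hxy : G.Adj x y := by
        by_contra hcon2
        exact hP4K1 (show P4pat G x d1 d5 y from
            ⟨a1, e51.symm, hy5.symm, na5, hcon2, fun h => ny1 h.symm,
              fun h => nzx (by rw [h]; exact hz5),
              fun h => na4 (by rw [h]; exact h4y.symm),
              fun h => hzy (by rw [← h]; exact hz1)⟩)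
          (fun h => na3 h.symm) (fun h => n13 h.symm) n35
          (fun h => ny3 h.symm) (fun h => nzx (by rw [← h]; exact hz3)) (Ne.symm q13)
          q35 (fun h => hzy (by rw [← h]; exact hz3))
      exact hC4 x y d5 d1 ⟨hxy, hy5, e51, a1.symm, na5, ny1,
        fun h => nzx (by rw [h]; exact hz5), fun h => hzy (by rw [h]; exact hz1)⟩
  -- M2 : N(z) contains no induced C5
  have hM2 : ∀ c1 c2 c3 c4 c5 : V,
      G.Adj z c1 → G.Adj z c2 → G.Adj z c3 → G.Adj z c4 → G.Adj z c5 →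
      G.Adj c1 c2 → G.Adj c2 c3 → G.Adj c3 c4 → G.Adj c4 c5 → G.Adj c5 c1 →
      ¬G.Adj c1 c3 → ¬G.Adj c1 c4 → ¬G.Adj c2 c4 → ¬G.Adj c2 c5 → ¬G.Adj c3 c5 →
      c1 ≠ c3 → c1 ≠ c4 → c2 ≠ c4 → c2 ≠ c5 → c3 ≠ c5 → False := by
    intro c1 c2 c3 c4 c5 hz1 hz2 hz3 hz4 hz5 e12 e23 e34 e45 e51 n13 n14 n24 n25 n35
      q13 q14 q24 q25 q35
    obtain ⟨x, h1x, hxz, hzx⟩ := hout c1 c3 c4 hz1 hz3 hz4 q13 q14 e34.ne n13 n14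
    have nx3 : ¬G.Adj x c3 := fun h =>
      hC4 c1 x c3 z ⟨h1x, h, hz3.symm, hz1, n13, fun hh => hzx hh.symm, q13, hxz⟩
    have nx4 : ¬G.Adj x c4 := fun h =>
      hC4 c1 x c4 z ⟨h1x, h, hz4.symm, hz1, n14, fun hh => hzx hh.symm, q14, hxz⟩
    have h25 : G.Adj x c2 ∨ G.Adj x c5 := by
      by_contra hcon2
      push_neg at hcon2
      exact hP4K1 (show P4pat G c2 c3 c4 c5 from ⟨e23, e34, e45, n24, n25, n35, q24, q25, q35⟩)
        hcon2.1 nx3 nx4 hcon2.2 (fun h => hzx (by rw [h]; exact hz2))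
        (fun h => hzx (by rw [h]; exact hz3)) (fun h => hzx (by rw [h]; exact hz4))
        (fun h => hzx (by rw [h]; exact hz5))
    rcases h25 with hx2 | hx5
    · have nx5 : ¬G.Adj x c5 := fun h =>
        hC4 c2 x c5 z ⟨hx2.symm, h, hz5.symm, hz2, n25, fun hh => hzx hh.symm, q25, hxz⟩
      exact hcore c1 c2 c3 c4 c5 x hz1 hz2 hz3 hz4 hz5 e12 e23 e34 e45 e51
        n13 n14 n24 n25 n35 q13 q14 q24 q25 q35 h1x.symm hx2 nx3 nx4 nx5 hzx hxz
    · have nx2 : ¬G.Adj x c2 := fun h =>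
        hC4 c2 x c5 z ⟨h.symm, hx5, hz5.symm, hz2, n25, fun hh => hzx hh.symm, q25, hxz⟩
      exact hcore c1 c5 c4 c3 c2 x hz1 hz5 hz4 hz3 hz2 e51.symm e45.symm e34.symm e23.symm
        e12.symm n14 n13 (fun h => n35 h.symm) (fun h => n25 h.symm) (fun h => n24 h.symm)
        q14 q13 (Ne.symm q35) (Ne.symm q25) (Ne.symm q24) h1x.symm hx5 nx4 nx3 nx2 hzx hxz
  -- two-clique cover of N(z)
  have hcover : ∃ A B : Set V, (∀ u, G.Adj z u ↔ (u ∈ A ∨ u ∈ B)) ∧ Disjoint A B ∧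
      G.IsClique A ∧ G.IsClique B := by
    by_cases hedge : ∃ u v, G.Adj z u ∧ G.Adj z v ∧ u ≠ v ∧ ¬G.Adj u v
    case neg =>
      push_neg at hedge
      refine ⟨{u | G.Adj z u}, ∅, fun u => by simp, Set.disjoint_empty _, ?_, ?_⟩
      · intro u hu v hv huv
        exact hedge u v hu hv huv
      · intro u hu
        exact absurd hu (Set.notMem_empty u)
    case pos =>
      obtain ⟨u0, v0, hzu0, hzv0, du0v0, nu0v0⟩ := hedge
      set X : Set V := {s | G.Adj z s ∧ s ≠ v0 ∧ ¬G.Adj s v0} with hX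
      set Y : Set V := {s | G.Adj z s ∧ s ≠ u0 ∧ ¬G.Adj s u0} with hY
      have hu0X : u0 ∈ X := ⟨hzu0, du0v0, nu0v0⟩
      have hv0Y : v0 ∈ Y := ⟨hzv0, Ne.symm du0v0, fun h => nu0v0 h.symm⟩
      have hXY : ∀ s, s ∈ X → s ∈ Y → False := fun s hsX hsY =>
        hM1 s u0 v0 hsX.1 hzu0 hzv0 hsY.2.1 hsX.2.1 du0v0 hsY.2.2 hsX.2.2 nu0v0
      have hXcl : ∀ s t, s ∈ X → t ∈ X → s ≠ t → G.Adj s t := by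
        intro s t hs ht hst
        by_contra hcon2
        exact hM1 s t v0 hs.1 ht.1 hzv0 hst hs.2.1 ht.2.1 hcon2 hs.2.2 ht.2.2
      have hYcl : ∀ s t, s ∈ Y → t ∈ Y → s ≠ t → G.Adj s t := by
        intro s t hs ht hst
        by_contra hcon2
        exact hM1 s t u0 hs.1 ht.1 hzu0 hst hs.2.1 ht.2.1 hcon2 hs.2.2 ht.2.2
      set A : Set V := X ∪ {r | G.Adj z r ∧ r ∉ X ∧ r ∉ Y ∧ ∀ s ∈ X, r = s ∨ G.Adj r s}
        with hA
      set B : Set V := {s | G.Adj z s ∧ s ∉ A} with hB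
      have hAz : ∀ u, u ∈ A → G.Adj z u := by
        rintro u (h | h)
        exacts [h.1, h.1]
      have hRadj : ∀ r, G.Adj z r → r ∉ X → r ∉ Y → G.Adj r u0 ∧ G.Adj r v0 := by
        intro r hzr hrX hrY
        constructor
        · have h' : r = u0 ∨ G.Adj r u0 := by
            by_contra hh
            push_neg at hh
            exact hrY ⟨hzr, hh.1, hh.2⟩
          rcases h' with h | h
          · exact absurd (h ▸ hu0X) hrX
          · exact h
        · have h' : r = v0 ∨ G.Adj r v0 := by
            by_contra hh
            push_neg at hh
            exact hrX ⟨hzr, hh.1, hh.2⟩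
          rcases h' with h | h
          · exact absurd (h ▸ hv0Y) hrY
          · exact h
      have hRR : ∀ r r', G.Adj z r → G.Adj z r' → r ∉ X → r ∉ Y → r' ∉ X → r' ∉ Y →
          r ≠ r' → G.Adj r r' := by
        intro r r' hzr hzr' hrX hrY hr'X hr'Y hrr'
        by_contra hcon2
        obtain ⟨hru0, hrv0⟩ := hRadj r hzr hrX hrY
        obtain ⟨hr'u0, hr'v0⟩ := hRadj r' hzr' hr'X hr'Y
        exact hC4 u0 r v0 r' ⟨hru0.symm, hrv0, hr'v0.symm, hr'u0, nu0v0, hcon2, du0v0, hrr'⟩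
      have hAcl : G.IsClique A := by
        rintro s hsA t htA hst
        rcases hsA with hsX | hsR <;> rcases htA with htX | htR
        · exact hXcl s t hsX htX hst
        · rcases htR.2.2.2 s hsX with h | h
          · exact absurd h.symm hst
          · exact h.symm
        · rcases hsR.2.2.2 t htX with h | h
          · exact absurd h hst
          · exact h
        · exact hRR s t hsR.1 htR.1 hsR.2.1 hsR.2.2.1 htR.2.1 htR.2.2.1 hst
      have hclass : ∀ w, w ∈ B → w ∈ Y ∨ (w ∉ X ∧ w ∉ Y ∧ ∃ x ∈ X, w ≠ x ∧ ¬G.Adj w x) := by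
        intro w hw
        by_cases hwY : w ∈ Y
        · exact Or.inl hwY
        right
        have hwX : w ∉ X := fun h => hw.2 (Or.inl h)
        refine ⟨hwX, hwY, ?_⟩
        by_contra hh
        push_neg at hh
        refine hw.2 (Or.inr ⟨hw.1, hwX, hwY, fun s hs => ?_⟩)
        by_cases h : w = s
        · exact Or.inl h
        · exact Or.inr (hh s hs h)
      have hBcl : G.IsClique B := by
        have key : ∀ s t, s ∈ B → t ∈ B → s ≠ t → s ∈ Y →
            (t ∉ X ∧ t ∉ Y ∧ ∃ x ∈ X, t ≠ x ∧ ¬G.Adj t x) → ¬G.Adj s t → False := by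
          intro s t hsB htB hst hsY ⟨htX, htY, xt, hxtX, htxt, ntxt⟩ hcon2
          by_cases hxts : G.Adj xt s
          · obtain ⟨htu0, htv0⟩ := hRadj t htB.1 htX htY
            have hne_u0xt : u0 ≠ xt := fun h => ntxt (h ▸ htu0)
            have hadj_u0xt := hXcl u0 xt hu0X hxtX hne_u0xt
            have hsv0 : s ≠ v0 := by
              intro h
              rw [h] at hxts
              exact hxtX.2.2 hxts
            have hsv0adj : G.Adj s v0 := hYcl s v0 hsY hv0Y hsv0
            exact hM2 v0 t u0 xt s hzv0 htB.1 hzu0 hxtX.1 hsY.1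
              htv0.symm htu0 hadj_u0xt hxts hsv0adj
              (fun h => nu0v0 h.symm) (fun h => hxtX.2.2 h.symm) ntxt
              (fun h => hcon2 h.symm) (fun h => hsY.2.2 h.symm)
              (Ne.symm du0v0) (fun h => hxtX.2.1 h.symm) htxt (Ne.symm hst)
              (fun h => hsY.2.1 h.symm)
          · have hxts' : xt ≠ s := fun h => hXY s (h ▸ hxtX) hsY
            exact hM1 xt s t hxtX.1 hsY.1 htB.1 hxts' (Ne.symm htxt) hst hxts
              (fun h => ntxt h.symm) hcon2
        rintro s hsB t htB hst
        by_contra hcon2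
        rcases hclass s hsB with hsY | hsR <;> rcases hclass t htB with htY | htR
        · exact hM1 s t u0 hsB.1 htB.1 hzu0 hst hsY.2.1 htY.2.1 hcon2 hsY.2.2 htY.2.2
        · exact key s t hsB htB hst hsY htR hcon2
        · exact key t s htB hsB (Ne.symm hst) htY hsR (fun h => hcon2 h.symm)
        · exact hcon2 (hRR s t hsB.1 htB.1 hsR.1 hsR.2.1 htR.1 htR.2.1 hst)
      refine ⟨A, B, ?_, ?_, hAcl, hBcl⟩
      · intro u
        constructor
        · intro hu
          by_cases h : u ∈ A
          · exact Or.inl h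
          · exact Or.inr ⟨hu, h⟩
        · rintro (h | h)
          · exact hAz u h
          · exact h.1
      · rw [Set.disjoint_left]
        intro u huA huB
        exact huB.2 huA
  obtain ⟨A, B, hABcov, hABdisj, hAcl, hBcl⟩ := hcover
  have hreach : ∀ v, G.Reachable z v := by
    intro v
    by_cases hvz : v = z
    · rw [hvz]
    by_cases hzv : G.Adj z v
    · exact hzv.reachable
    have hv5 : v = b ∨ v = c ∨ G.Adj v a ∨ G.Adj v b ∨ G.Adj v c := by
      by_contra hh
      push_neg at hh
      obtain ⟨hvb, hvc, hva, hvb', hvc'⟩ := hh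
      exact hP4K1 (show P4pat G z a b c from ⟨hza, hab, hbc, nzb, nzc, nac, dzb, dzc, dac⟩)
        (fun h => hzv h.symm) hva hvb' hvc' hvz
        (fun h => hzv (by rw [h]; exact hza)) hvb hvc
    rcases hv5 with rfl | rfl | h | h | h
    · exact (hza.reachable).trans hab.reachable
    · exact ((hza.reachable).trans hab.reachable).trans hbc.reachable
    · exact (hza.reachable).trans h.symm.reachable
    · exact ((hza.reachable).trans hab.reachable).trans h.symm.reachable
    · exact (((hza.reachable).trans hab.reachable).trans hbc.reachable).trans h.symm.reachable
  haveI : Nonempty V := ⟨z⟩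
  refine ⟨⟨fun u v => (hreach u).symm.trans (hreach v)⟩,
    {v | v ≠ z ∧ ¬G.Adj z v}, A ∪ {z}, B, ?_, ?_, ?_, ?_, ?_, ?_, ?_⟩
  · ext v
    simp only [Set.mem_union, Set.mem_setOf_eq, Set.mem_singleton_iff, Set.mem_univ, iff_true]
    by_cases hvz : v = z
    · exact Or.inl (Or.inr (Or.inr hvz))
    by_cases hzv : G.Adj z v
    · rcases (hABcov v).1 hzv with h | h
      · exact Or.inl (Or.inr (Or.inl h))
      · exact Or.inr h
    · exact Or.inl (Or.inl ⟨hvz, hzv⟩)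
  · rw [Set.disjoint_left]
    rintro u hu (h | h)
    · exact hu.2 ((hABcov u).2 (Or.inl h))
    · exact hu.1 h
  · rw [Set.disjoint_left]
    intro u hu h
    exact hu.2 ((hABcov u).2 (Or.inr h))
  · rw [Set.disjoint_left]
    rintro u (h | h) hB
    · exact Set.disjoint_left.1 hABdisj h hB
    · rw [Set.mem_singleton_iff] at h
      exact G.irrefl (h ▸ (hABcov u).2 (Or.inr hB))
  · constructor
    intro f
    have hp := P4pat_of_emb f
    obtain ⟨h1', h2', h3', n1', n2', n3', e1', e2', e3'⟩ := hp
    exact hP4K1 (show P4pat G (f 0).1 (f 1).1 (f 2).1 (f 3).1 from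
        ⟨h1', h2', h3', n1', n2', n3', fun h => e1' (Subtype.ext h),
          fun h => e2' (Subtype.ext h), fun h => e3' (Subtype.ext h)⟩)
      (f 0).2.2 (f 1).2.2 (f 2).2.2 (f 3).2.2
      (Ne.symm (f 0).2.1) (Ne.symm (f 1).2.1) (Ne.symm (f 2).2.1) (Ne.symm (f 3).2.1)
  · rintro u hu v hv huv
    rcases hu with huA | huz <;> rcases hv with hvA | hvz
    · exact hAcl huA hvA huv
    · rw [Set.mem_singleton_iff] at hvz
      rw [hvz]
      exact ((hABcov u).2 (Or.inl huA)).symm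
    · rw [Set.mem_singleton_iff] at huz
      rw [huz]
      exact (hABcov v).2 (Or.inl hvA)
    · rw [Set.mem_singleton_iff] at huz hvz
      exact absurd (huz.trans hvz.symm) huv
  · exact hBcl
end

section
/- Let G be a connected (2K2, K1+C4)-free graph. Then either G is a pseudo-split graph, or there exists a partition (V1, V2, V3, V4, V5, V6) of the vertex set of G such that: (i) V1 induces either a pseudo-split subgraph of G with ω([V1]) ≤ ω(G) − 1, or the complement of a bipartite graph; and (ii) V2, V3, V4, V5, V6 are independent sets; moreover, if V1 induces a pseudo-split graph then V5 and V6 are empty. -/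
open SimpleGraph

section MyHelpers
variable {V : Type*} {G : SimpleGraph V}

private lemma no2K2 (h1 : IndFree graph2K2 G) {a b c d : V}
    (hab : G.Adj a b) (hcd : G.Adj c d)
    (hac : ¬G.Adj a c) (had : ¬G.Adj a d) (hbc : ¬G.Adj b c) (hbd : ¬G.Adj b d)
    (nac : a ≠ c) (nad : a ≠ d) (nbc : b ≠ c) (nbd : b ≠ d) : False := by
  have nab : a ≠ b := hab.ne
  have ncd : c ≠ d := hcd.ne
  apply h1.false
  have hinj : Function.Injective ![a,b,c,d] := by
    intro x y h
    fin_cases x <;> fin_cases y <;> simp_all <;> simp_all [eq_comm]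
  refine ⟨⟨![a,b,c,d], hinj⟩, ?_⟩
  intro x y
  show G.Adj _ _ ↔ graph2K2.Adj x y
  fin_cases x <;> fin_cases y <;>
    simp_all [graph2K2, SimpleGraph.fromRel_adj, G.adj_comm a b, G.adj_comm c d,
      G.adj_comm a c, G.adj_comm a d, G.adj_comm b c, G.adj_comm b d]

private lemma noWheel (h2 : IndFree graphWheel G) {a b c d e : V}
    (hab : G.Adj a b) (hbc : G.Adj b c) (hcd : G.Adj c d) (hda : G.Adj d a)
    (hac : ¬G.Adj a c) (hbd : ¬G.Adj b d)
    (hea : G.Adj e a) (heb : G.Adj e b) (hec : G.Adj e c) (hed : G.Adj e d)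
    (nac : a ≠ c) (nbd : b ≠ d) : False := by
  have nab : a ≠ b := hab.ne
  apply h2.false
  have hinj : Function.Injective ![a,b,c,d,e] := by
    intro x y h
    fin_cases x <;> fin_cases y <;> simp_all <;> simp_all [eq_comm]
  refine ⟨⟨![a,b,c,d,e], hinj⟩, ?_⟩
  intro x y
  show G.Adj _ _ ↔ graphWheel.Adj x y
  fin_cases x <;> fin_cases y <;>
    simp_all [graphWheel, SimpleGraph.fromRel_adj, G.adj_comm a b, G.adj_comm b c,
      G.adj_comm c d, G.adj_comm d a, G.adj_comm a c, G.adj_comm b d,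
      G.adj_comm e a, G.adj_comm e b, G.adj_comm e c, G.adj_comm e d]

private lemma c4e01 : graphC4.Adj 0 1 := by
  simp only [graphC4, SimpleGraph.fromRel_adj]; decide
private lemma c4e12 : graphC4.Adj 1 2 := by
  simp only [graphC4, SimpleGraph.fromRel_adj]; decide
private lemma c4e23 : graphC4.Adj 2 3 := by
  simp only [graphC4, SimpleGraph.fromRel_adj]; decide
private lemma c4e30 : graphC4.Adj 3 0 := by
  simp only [graphC4, SimpleGraph.fromRel_adj]; decide
private lemma c4n02 : ¬graphC4.Adj 0 2 := by
  simp only [graphC4, SimpleGraph.fromRel_adj]; decide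
private lemma c4n13 : ¬graphC4.Adj 1 3 := by
  simp only [graphC4, SimpleGraph.fromRel_adj]; decide
private lemma fne02 : (0 : Fin 4) ≠ 2 := by decide
private lemma fne13 : (1 : Fin 4) ≠ 3 := by decide

end MyHelpers

/-- Structure of connected `(2K₂, K₁ + C₄)`-free graphs. -/
theorem stmt2 {V : Type*} [Fintype V] (G : SimpleGraph V)
    (hconn : G.Connected) (h1 : IndFree graph2K2 G) (h2 : IndFree graphWheel G) :
    IsPseudoSplit G ∨
      ∃ V1 V2 V3 V4 V5 V6 : Set V,
        V1 ∪ V2 ∪ V3 ∪ V4 ∪ V5 ∪ V6 = (Set.univ : Set V) ∧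
        List.Pairwise Disjoint [V1, V2, V3, V4, V5, V6] ∧
        ((IsPseudoSplit (G.induce V1) ∧ (G.induce V1).cliqueNum ≤ G.cliqueNum - 1) ∨
          ((G.induce V1)ᶜ).Colorable 2) ∧
        IsIndep G V2 ∧ IsIndep G V3 ∧ IsIndep G V4 ∧ IsIndep G V5 ∧ IsIndep G V6 ∧
        (IsPseudoSplit (G.induce V1) → V5 = ∅ ∧ V6 = ∅) := by
  classical
  right
  obtain ⟨K, hK⟩ := G.exists_isNClique_cliqueNum
  have hne : Nonempty V := hconn.nonempty
  have hω1 : 1 ≤ G.cliqueNum := by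
    obtain ⟨w⟩ := hne
    have hcl : G.IsClique ({w} : Finset V) := by
      simp [SimpleGraph.isClique_iff, Set.pairwise_singleton]
    have := SimpleGraph.IsClique.card_le_cliqueNum (G := G) (tc := hcl)
    simpa using this
  have hKne : K.Nonempty := Finset.card_pos.mp (by rw [hK.2]; omega)
  obtain ⟨v, hv⟩ := hKne
  set N : Set V := {u | G.Adj v u} with hN
  set M : Set V := {u | ¬G.Adj v u ∧ u ≠ v} with hM
  -- the pair lemma
  have pair : ∀ x, G.Adj v x → ∀ ⦃p q : V⦄, p ∈ M → q ∈ M → G.Adj p q →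
      (G.Adj x p ∨ G.Adj x q) := by
    intro x hvx p q hp hq hpq
    by_contra hcon
    push_neg at hcon
    exact no2K2 h1 hvx hpq hp.1 hq.1 hcon.1 hcon.2
      (Ne.symm hp.2) (Ne.symm hq.2)
      (fun h => hp.1 (h ▸ hvx)) (fun h => hq.1 (h ▸ hvx))
  set K' : Finset V := K.erase v with hK'
  have hK'sub : ∀ x ∈ K', G.Adj v x := by
    intro x hx
    exact hK.1 (Finset.mem_coe.mpr hv) (Finset.mem_coe.mpr (Finset.mem_of_mem_erase hx))
      (Ne.symm (Finset.ne_of_mem_erase hx))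
  have hK'adj : ∀ x ∈ K', ∀ y ∈ K', x ≠ y → G.Adj x y := by
    intro x hx y hy hxy
    exact hK.1 (Finset.mem_coe.mpr (Finset.mem_of_mem_erase hx))
      (Finset.mem_coe.mpr (Finset.mem_of_mem_erase hy)) hxy
  -- if p q ∈ M are adjacent and all of K' sees both, we get a too-large clique
  have clique2 : ∀ ⦃p q : V⦄, p ∈ M → q ∈ M → G.Adj p q →
      (∀ x ∈ K', G.Adj x p) → (∀ x ∈ K', G.Adj x q) → False := by
    intro p q hp hq hpq hallp hallq
    have hpK' : p ∉ K' := fun h => hp.1 (hK'sub p h)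
    have hqK' : q ∉ K' := fun h => hq.1 (hK'sub q h)
    have hpi : p ∉ insert q K' := by
      simp only [Finset.mem_insert]
      rintro (rfl | h)
      · exact G.irrefl hpq
      · exact hpK' h
    have hcl : G.IsClique (insert p (insert q K') : Finset V) := by
      intro x hx y hy hxy
      simp only [Finset.coe_insert, Set.mem_insert_iff, Finset.mem_coe] at hx hy
      rcases hx with rfl | rfl | hx <;> rcases hy with rfl | rfl | hy
      · exact absurd rfl hxy
      · exact hpq
      · exact (hallp y hy).symm
      · exact hpq.symm
      · exact absurd rfl hxy
      · exact (hallq y hy).symm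
      · exact hallp x hx
      · exact hallq x hx
      · exact hK'adj x hx y hy hxy
    have hle := SimpleGraph.IsClique.card_le_cliqueNum (G := G) (tc := hcl)
    rw [Finset.card_insert_of_notMem hpi, Finset.card_insert_of_notMem hqK',
      Finset.card_erase_of_mem hv, hK.2] at hle
    omega
  -- wheel construction when two K'-vertices miss different triangle vertices
  have wheelstep : ∀ ⦃p q r y z : V⦄, p ∈ M → q ∈ M → r ∈ M →
      G.Adj p q → G.Adj q r → G.Adj p r → y ∈ K' → z ∈ K' →
      ¬G.Adj y p → ¬G.Adj z q → False := by
    intro p q r y z hp hq hr hpq hqr hpr hyK' hzK' hyp hzq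
    have hvy := hK'sub y hyK'
    have hvz := hK'sub z hzK'
    have hyq : G.Adj y q := (pair y hvy hp hq hpq).resolve_left hyp
    have hyr : G.Adj y r := (pair y hvy hp hr hpr).resolve_left hyp
    have hzp : G.Adj z p := (pair z hvz hp hq hpq).resolve_right hzq
    have hzr : G.Adj z r := (pair z hvz hq hr hqr).resolve_left hzq
    have hyz : y ≠ z := fun h => hyp (by rw [h]; exact hzp)
    have hadjyz : G.Adj y z := hK'adj y hyK' z hzK' hyz
    exact noWheel h2 hyq hpq.symm hzp.symm hadjyz.symm hyp
      (fun h => hzq h.symm) hyr.symm hqr.symm hpr.symm hzr.symm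
      (fun h => hp.1 (by rw [← h]; exact hvy))
      (fun h => hq.1 (by rw [h]; exact hvz))
  -- no triangle in M
  have notri : ∀ ⦃a b c : V⦄, a ∈ M → b ∈ M → c ∈ M →
      G.Adj a b → G.Adj b c → G.Adj a c → False := by
    intro a b c ha hb hc hab hbc hac
    by_cases hA : ∀ x ∈ K', G.Adj x a
    · by_cases hB : ∀ x ∈ K', G.Adj x b
      · exact clique2 ha hb hab hA hB
      · by_cases hC : ∀ x ∈ K', G.Adj x c
        · exact clique2 ha hc hac hA hC
        · push_neg at hB hC
          obtain ⟨y, hyK', hyb⟩ := hB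
          obtain ⟨z, hzK', hzc⟩ := hC
          exact wheelstep hb hc ha hbc hac.symm hab.symm hyK' hzK' hyb hzc
    · by_cases hB : ∀ x ∈ K', G.Adj x b
      · by_cases hC : ∀ x ∈ K', G.Adj x c
        · exact clique2 hb hc hbc hB hC
        · push_neg at hA hC
          obtain ⟨y, hyK', hya⟩ := hA
          obtain ⟨z, hzK', hzc⟩ := hC
          exact wheelstep ha hc hb hac hbc.symm hab hyK' hzK' hya hzc
      · push_neg at hA hB
        obtain ⟨y, hyK', hya⟩ := hA
        obtain ⟨z, hzK', hzb⟩ := hB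
        exact wheelstep ha hb hc hab hbc hac hyK' hzK' hya hzb
  -- V1 = N(v) is pseudo-split
  have memN : ∀ u : V, u ∈ N ↔ G.Adj v u := fun u => Iff.rfl
  have hPS : IsPseudoSplit (G.induce N) := by
    constructor
    · exact ⟨fun f => h1.false ((SimpleGraph.Embedding.induce N).comp f)⟩
    · constructor
      intro f
      have hmr : ∀ x y : Fin 4, (G.induce N).Adj (f x) (f y) ↔ graphC4.Adj x y :=
        fun x y => f.map_rel_iff
      have hadj : ∀ x y : Fin 4, graphC4.Adj x y → G.Adj (f x).1 (f y).1 := by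
        intro x y h
        exact (hmr x y).mpr h
      have hnadj : ∀ x y : Fin 4, ¬graphC4.Adj x y → ¬G.Adj (f x).1 (f y).1 := by
        intro x y h hGadj
        exact h ((hmr x y).mp hGadj)
      have hnev : ∀ x y : Fin 4, x ≠ y → (f x).1 ≠ (f y).1 := by
        intro x y hxy h
        exact hxy (f.injective (Subtype.ext h))
      exact noWheel h2 (hadj 0 1 c4e01) (hadj 1 2 c4e12)
        (hadj 2 3 c4e23) (hadj 3 0 c4e30)
        (hnadj 0 2 c4n02) (hnadj 1 3 c4n13)
        (f 0).2 (f 1).2 (f 2).2 (f 3).2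
        (hnev 0 2 fne02) (hnev 1 3 fne13)
  -- clique number bound
  have hclq : (G.induce N).cliqueNum ≤ G.cliqueNum - 1 := by
    obtain ⟨s, hs⟩ := (G.induce N).exists_isNClique_cliqueNum
    have hvim : v ∉ s.image Subtype.val := by
      simp only [Finset.mem_image, not_exists]
      rintro u ⟨hu, hval⟩
      have huv : G.Adj v u.1 := u.2
      rw [hval] at huv
      exact G.irrefl huv
    have hcl : G.IsClique (insert v (s.image Subtype.val) : Finset V) := by
      intro x hx y hy hxy
      simp only [Finset.coe_insert, Set.mem_insert_iff, Finset.mem_coe,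
        Finset.mem_image] at hx hy
      rcases hx with rfl | ⟨ux, hux, rfl⟩ <;> rcases hy with rfl | ⟨uy, huy, rfl⟩
      · exact absurd rfl hxy
      · exact uy.2
      · exact ux.2.symm
      · exact hs.1 (Finset.mem_coe.mpr hux) (Finset.mem_coe.mpr huy)
          (fun h => hxy (congrArg Subtype.val h))
    have hle := SimpleGraph.IsClique.card_le_cliqueNum (G := G) (tc := hcl)
    rw [Finset.card_insert_of_notMem hvim,
      Finset.card_image_of_injective _ Subtype.val_injective, hs.2] at hle
    omega
  -- assemble the partition
  have hvN : v ∉ N := fun h => G.irrefl h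
  have hvM : v ∉ M := fun h => h.2 rfl
  have dNM : ∀ S : Set V, S ⊆ M → Disjoint N S :=
    fun S hS => Set.disjoint_left.mpr (fun {u} hu hus => (hS hus).1 hu)
  by_cases hE : ∃ x y : V, x ∈ M ∧ y ∈ M ∧ G.Adj x y
  · obtain ⟨x, y, hx, hy, hxy⟩ := hE
    set A : Set V := {u | u ∈ M ∧ G.Adj x u} with hA
    set B : Set V := {u | u ∈ M ∧ G.Adj y u ∧ ¬G.Adj x u} with hB
    set W : Set V := {u | u ∈ M ∧ ¬G.Adj x u ∧ ¬G.Adj y u} with hW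
    have hAM : A ⊆ M := fun u hu => hu.1
    have hBM : B ⊆ M := fun u hu => hu.1
    have hWM : W ⊆ M := fun u hu => hu.1
    refine ⟨N, {v} ∪ W, A, B, ∅, ∅, ?_, ?_, Or.inl ⟨hPS, hclq⟩, ?_, ?_, ?_,
      Set.pairwise_empty _, Set.pairwise_empty _, fun _ => ⟨rfl, rfl⟩⟩
    · ext u
      simp only [Set.mem_union, Set.mem_univ, iff_true, Set.mem_singleton_iff,
        Set.mem_empty_iff_false, or_false]
      have hcase : u ∈ N ∨ u = v ∨ u ∈ M := by
        by_cases h1u : G.Adj v u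
        · exact Or.inl h1u
        · by_cases h2u : u = v
          · exact Or.inr (Or.inl h2u)
          · exact Or.inr (Or.inr ⟨h1u, h2u⟩)
      rcases hcase with h | h | h
      · tauto
      · tauto
      · by_cases hxu : G.Adj x u
        · have : u ∈ A := ⟨h, hxu⟩
          tauto
        · by_cases hyu : G.Adj y u
          · have : u ∈ B := ⟨h, hyu, hxu⟩
            tauto
          · have : u ∈ W := ⟨h, hxu, hyu⟩
            tauto
    · refine List.Pairwise.cons ?_ (List.Pairwise.cons ?_ (List.Pairwise.cons ?_
        (List.Pairwise.cons ?_ (List.Pairwise.cons ?_ (List.Pairwise.cons (fun S hS => absurd hS List.not_mem_nil) List.Pairwise.nil)))))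
      · intro S hS
        simp only [List.mem_cons, List.not_mem_nil, or_false] at hS
        rcases hS with rfl | rfl | rfl | rfl | rfl
        · exact Set.disjoint_union_right.mpr
            ⟨Set.disjoint_singleton_right.mpr hvN, dNM W hWM⟩
        · exact dNM A hAM
        · exact dNM B hBM
        · exact Set.disjoint_empty _
        · exact Set.disjoint_empty _
      · intro S hS
        simp only [List.mem_cons, List.not_mem_nil, or_false] at hS
        rcases hS with rfl | rfl | rfl | rfl
        · refine Set.disjoint_union_left.mpr ⟨Set.disjoint_singleton_left.mpr ?_, ?_⟩
          · exact fun h => hvM (hAM h)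
          · exact Set.disjoint_left.mpr (fun {u} hu hua => hu.2.1 hua.2)
        · refine Set.disjoint_union_left.mpr ⟨Set.disjoint_singleton_left.mpr ?_, ?_⟩
          · exact fun h => hvM (hBM h)
          · exact Set.disjoint_left.mpr (fun {u} hu hub => hu.2.2 hub.2.1)
        · exact Set.disjoint_empty _
        · exact Set.disjoint_empty _
      · intro S hS
        simp only [List.mem_cons, List.not_mem_nil, or_false] at hS
        rcases hS with rfl | rfl | rfl
        · exact Set.disjoint_left.mpr (fun {u} hu hub => hub.2.2 hu.2)
        · exact Set.disjoint_empty _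
        · exact Set.disjoint_empty _
      · intro S hS
        simp only [List.mem_cons, List.not_mem_nil, or_false] at hS
        rcases hS with rfl | rfl
        · exact Set.disjoint_empty _
        · exact Set.disjoint_empty _
      · intro S hS
        simp only [List.mem_cons, List.not_mem_nil, or_false] at hS
        rcases hS with rfl
        exact Set.disjoint_empty _
    · -- {v} ∪ W independent
      refine fun p hp q hq hpq => ?_
      rcases hp with rfl | hp <;> rcases hq with rfl | hq
      · exact absurd rfl hpq
      · exact hq.1.1
      · exact fun h => hp.1.1 h.symm
      · intro h
        exact no2K2 h1 hxy h hp.2.1 hq.2.1 hp.2.2 hq.2.2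
          (fun he => hp.2.2 ((he ▸ hxy).symm)) (fun he => hq.2.2 ((he ▸ hxy).symm))
          (fun he => hp.2.1 (he ▸ hxy)) (fun he => hq.2.1 (he ▸ hxy))
    · -- A independent
      refine fun p hp q hq hpq h => ?_
      exact notri hx hp.1 hq.1 hp.2 h hq.2
    · -- B independent
      refine fun p hp q hq hpq h => ?_
      exact notri hy hp.1 hq.1 hp.2.1 h hq.2.1
  · push_neg at hE
    refine ⟨N, {v} ∪ M, ∅, ∅, ∅, ∅, ?_, ?_, Or.inl ⟨hPS, hclq⟩, ?_,
      Set.pairwise_empty _, Set.pairwise_empty _, Set.pairwise_empty _,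
      Set.pairwise_empty _, fun _ => ⟨rfl, rfl⟩⟩
    · ext u
      simp only [Set.mem_union, Set.mem_univ, iff_true, Set.mem_singleton_iff,
        Set.mem_empty_iff_false, or_false]
      by_cases h1u : G.Adj v u
      · tauto
      · by_cases h2u : u = v
        · tauto
        · have : u ∈ M := ⟨h1u, h2u⟩
          tauto
    · refine List.Pairwise.cons ?_ (List.Pairwise.cons ?_ (List.Pairwise.cons ?_
        (List.Pairwise.cons ?_ (List.Pairwise.cons ?_ (List.Pairwise.cons (fun S hS => absurd hS List.not_mem_nil) List.Pairwise.nil)))))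
      · intro S hS
        simp only [List.mem_cons, List.not_mem_nil, or_false] at hS
        rcases hS with rfl | rfl | rfl | rfl | rfl
        · exact Set.disjoint_union_right.mpr
            ⟨Set.disjoint_singleton_right.mpr hvN, dNM M (fun u hu => hu)⟩
        · exact Set.disjoint_empty _
        · exact Set.disjoint_empty _
        · exact Set.disjoint_empty _
        · exact Set.disjoint_empty _
      · intro S hS
        simp only [List.mem_cons, List.not_mem_nil, or_false] at hS
        rcases hS with rfl | rfl | rfl | rfl
        all_goals exact Set.disjoint_empty _
      · intro S hS
        simp only [List.mem_cons, List.not_mem_nil, or_false] at hS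
        rcases hS with rfl | rfl | rfl
        all_goals exact Set.disjoint_empty _
      · intro S hS
        simp only [List.mem_cons, List.not_mem_nil, or_false] at hS
        rcases hS with rfl | rfl
        all_goals exact Set.disjoint_empty _
      · intro S hS
        simp only [List.mem_cons, List.not_mem_nil, or_false] at hS
        rcases hS with rfl
        exact Set.disjoint_empty _
    · refine fun p hp q hq hpq => ?_
      rcases hp with rfl | hp <;> rcases hq with rfl | hq
      · exact absurd rfl hpq
      · exact hq.1
      · exact fun h => hp.1 h.symm
      · exact hE p q hp hq
end

section
/- Let G be a (2K2, K1+C4)-free graph. Then χ(G) ≤ ω(G) + 5. -/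
open SimpleGraph

section Stmt3Aux

open Finset

set_option linter.unusedTactic false
set_option linter.unreachableTactic false
set_option linter.unusedVariables false

variable {V : Type*} {G : SimpleGraph V}


lemma no2K2_s3 (h : IndFree graph2K2 G) :
    ∀ ⦃a b c d : V⦄, G.Adj a b → G.Adj c d → a ≠ c → a ≠ d → b ≠ c → b ≠ d →
      ¬G.Adj a c → ¬G.Adj a d → ¬G.Adj b c → ¬G.Adj b d → False := by
  intro a b c d hab hcd hac had hbc hbd nac nad nbc nbd
  have hba := hab.symm
  have hdc := hcd.symm
  refine h.false ⟨⟨![a,b,c,d], ?_⟩, ?_⟩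
  · intro i j hij
    have h1 : a ≠ b := hab.ne
    have h2 : c ≠ d := hcd.ne
    fin_cases i <;> fin_cases j <;> simp_all <;> tauto
  · intro i j
    fin_cases i <;> fin_cases j <;>
      simp [graph2K2, SimpleGraph.fromRel_adj, G.irrefl] <;>
      first
        | tauto
        | (try simp [hab, hcd, hba, hdc, nac, nad, nbc, nbd]) <;> tauto

lemma noW4 (h : IndFree graphWheel G) :
    ∀ ⦃a b c d e : V⦄, G.Adj a b → G.Adj b c → G.Adj c d → G.Adj d a →
      a ≠ c → b ≠ d → ¬G.Adj a c → ¬G.Adj b d →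
      G.Adj e a → G.Adj e b → G.Adj e c → G.Adj e d → False := by
  intro a b c d e hab hbc hcd hda hac hbd nac nbd hea heb hec hed
  have hba := hab.symm; have hcb := hbc.symm; have hdc := hcd.symm; have had := hda.symm
  have hae := hea.symm; have hbe := heb.symm; have hce := hec.symm; have hde := hed.symm
  refine h.false ⟨⟨![a,b,c,d,e], ?_⟩, ?_⟩
  · intro i j hij
    have h1 : a ≠ b := hab.ne
    have h2 : b ≠ c := hbc.ne
    have h3 : c ≠ d := hcd.ne
    have h4 : d ≠ a := hda.ne
    have h5 : e ≠ a := hea.ne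
    have h6 : e ≠ b := heb.ne
    have h7 : e ≠ c := hec.ne
    have h8 : e ≠ d := hed.ne
    fin_cases i <;> fin_cases j <;> simp_all <;> tauto
  · intro i j
    fin_cases i <;> fin_cases j <;>
      simp [graphWheel, SimpleGraph.fromRel_adj, G.irrefl] <;>
      first
        | tauto
        | (try simp [hab, hbc, hcd, hda, hba, hcb, hdc, had, hea, heb, hec, hed,
            hae, hbe, hce, hde, nac, nbd]) <;> tauto


lemma psColorable [Fintype V] (G : SimpleGraph V)
    (h2 : ∀ ⦃a b c d : V⦄, G.Adj a b → G.Adj c d → a ≠ c → a ≠ d → b ≠ c → b ≠ d →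
      ¬G.Adj a c → ¬G.Adj a d → ¬G.Adj b c → ¬G.Adj b d → False)
    (hC4 : ∀ ⦃a b c d : V⦄, G.Adj a b → G.Adj b c → G.Adj c d → G.Adj d a → a ≠ c → b ≠ d →
      G.Adj a c ∨ G.Adj b d) :
    G.Colorable (G.cliqueNum + 1) := by
  classical
  letI : LinearOrder V := LinearOrder.lift' (Fintype.equivFin V) (Fintype.equivFin V).injective
  obtain ⟨K, hK⟩ := G.exists_isNClique_cliqueNum
  set ω := G.cliqueNum with hω
  have hKcard : K.card = ω := hK.card_eq
  have hKcl : G.IsClique (K : Set V) := hK.isClique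
  let idx : V → ℕ := fun k => (K.filter (fun u => u < k)).card
  have hidxlt : ∀ k ∈ K, idx k < ω := by
    intro k hk
    have hsub : K.filter (fun u => u < k) ⊆ K.erase k := by
      intro u hu
      rw [Finset.mem_filter] at hu
      exact Finset.mem_erase.2 ⟨ne_of_lt hu.2, hu.1⟩
    have := Finset.card_le_card hsub
    have h2' := Finset.card_erase_of_mem hk
    have hpos : 0 < K.card := Finset.card_pos.2 ⟨k, hk⟩
    simp only [idx]
    omega
  have hidxmono : ∀ u ∈ K, ∀ v ∈ K, u < v → idx u < idx v := by
    intro u hu v hv huv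
    apply Finset.card_lt_card
    rw [Finset.ssubset_iff_of_subset]
    · exact ⟨u, Finset.mem_filter.2 ⟨hu, huv⟩,
        fun h => absurd (Finset.mem_filter.1 h).2 (lt_irrefl u)⟩
    · intro w hw
      rw [Finset.mem_filter] at hw ⊢
      exact ⟨hw.1, hw.2.trans huv⟩
  have hidxinj : ∀ u ∈ K, ∀ v ∈ K, idx u = idx v → u = v := by
    intro u hu v hv h
    rcases lt_trichotomy u v with hlt | heq | hgt
    · exact absurd h (Nat.ne_of_lt (hidxmono u hu v hv hlt))
    · exact heq
    · exact absurd h.symm (Nat.ne_of_lt (hidxmono v hv u hu hgt))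
  let A : V → Finset V := fun v => K.filter (fun k => ¬ G.Adj v k)
  have hAmem : ∀ v k, k ∈ A v ↔ k ∈ K ∧ ¬ G.Adj v k := by
    intro v k; simp [A]
  have hAK : ∀ v u, u ∈ K → u ∉ A v → u ≠ v → G.Adj v u := by
    intro v u hu hnA hne
    by_contra hn
    exact hnA ((hAmem v u).2 ⟨hu, hn⟩)
  have cliq_le : ∀ (s : Finset V), G.IsClique (s : Set V) → s.card ≤ ω :=
    fun s hs => SimpleGraph.IsClique.card_le_cliqueNum (tc := hs)
  have hAne : ∀ v ∉ K, (A v).Nonempty := by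
    intro v hv
    by_contra hne
    rw [Finset.not_nonempty_iff_eq_empty] at hne
    have hcl : G.IsClique (insert v (K : Set V)) := by
      apply hKcl.insert
      intro b hb hbv
      exact hAK v b hb (by rw [hne]; exact Finset.notMem_empty b) hbv.symm
    have hle : (insert v K).card ≤ ω := cliq_le (insert v K) (by rwa [Finset.coe_insert])
    rw [Finset.card_insert_of_notMem hv, hKcard] at hle
    omega
  let color : V → ℕ := fun v =>
    if v ∈ K then idx v
    else if h : ∃ k, A v = {k} then idx h.choose
    else ω
  have hcolK : ∀ v ∈ K, color v = idx v := by
    intro v hv; simp only [color, if_pos hv]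
  have hcolT : ∀ v, v ∉ K → ∀ (h : ∃ k, A v = {k}), color v = idx h.choose := by
    intro v hv h
    simp only [color, if_neg hv, dif_pos h]
  have hcolS : ∀ v, v ∉ K → ¬(∃ k, A v = {k}) → color v = ω := by
    intro v hv h
    simp only [color, if_neg hv, dif_neg h]
  have hchooseK : ∀ v (h : ∃ k, A v = {k}), h.choose ∈ K ∧ ¬ G.Adj v h.choose := by
    intro v h
    have hm : h.choose ∈ ({h.choose} : Finset V) := Finset.mem_singleton_self _
    rw [← h.choose_spec] at hm
    exact (hAmem v _).1 hm
  have hbound : ∀ v, color v < ω + 1 := by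
    intro v
    by_cases hv : v ∈ K
    · rw [hcolK v hv]; exact Nat.lt_succ_of_lt (hidxlt v hv)
    · by_cases h1 : ∃ k, A v = {k}
      · rw [hcolT v hv h1]
        exact Nat.lt_succ_of_lt (hidxlt _ (hchooseK v h1).1)
      · rw [hcolS v hv h1]; omega
  have keyKT : ∀ v w, G.Adj v w → v ∈ K → w ∉ K → color v ≠ color w := by
    intro v w hadj hv hw
    by_cases h1 : ∃ k, A w = {k}
    · rw [hcolK v hv, hcolT w hw h1]
      intro heq
      obtain ⟨hkK, hknadj⟩ := hchooseK w h1
      have := hidxinj v hv _ hkK heq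
      exact hknadj (this ▸ hadj.symm)
    · rw [hcolK v hv, hcolS w hw h1]
      exact Nat.ne_of_lt (hidxlt v hv)
  have keyOut : ∀ v w, G.Adj v w → v ∉ K → w ∉ K → color v ≠ color w := by
    intro v w hadj hv hw
    have hvw : v ≠ w := hadj.ne
    have hint : ∀ k ∈ A v, k ∈ A w → ∀ k' ∈ A v, k' ∈ A w → k = k' := by
      intro k hk hkw k' hk' hk'w
      by_contra hne
      have hkK := ((hAmem v k).1 hk).1
      have hk'K := ((hAmem v k').1 hk').1
      have hkk' : G.Adj k k' := hKcl hkK hk'K hne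
      exact h2 hadj hkk'
        (fun h => hv (h ▸ hkK)) (fun h => hv (h ▸ hk'K))
        (fun h => hw (h ▸ hkK)) (fun h => hw (h ▸ hk'K))
        ((hAmem v k).1 hk).2 ((hAmem v k').1 hk').2
        ((hAmem w k).1 hkw).2 ((hAmem w k').1 hk'w).2
    have hnest : A v ⊆ A w ∨ A w ⊆ A v := by
      by_contra hno
      push_neg at hno
      obtain ⟨a, ha, haw⟩ := Finset.not_subset.1 hno.1
      obtain ⟨b, hb, hbv⟩ := Finset.not_subset.1 hno.2
      have haK := ((hAmem v a).1 ha).1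
      have hbK := ((hAmem w b).1 hb).1
      have hab : a ≠ b := fun h => haw (h ▸ hb)
      have hwa : G.Adj w a := hAK w a haK haw (fun h => hw (h ▸ haK))
      have hvb : G.Adj v b := hAK v b hbK hbv (fun h => hv (h ▸ hbK))
      have hC := hC4 hadj hwa (hKcl haK hbK hab) hvb.symm
        (fun h => hv (h ▸ haK)) (fun h => hw (h ▸ hbK))
      rcases hC with h | h
      · exact ((hAmem v a).1 ha).2 h
      · exact ((hAmem w b).1 hb).2 h
    by_cases h1v : ∃ k, A v = {k}
    · by_cases h1w : ∃ k, A w = {k}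
      · rw [hcolT v hv h1v, hcolT w hw h1w]
        intro heq
        obtain ⟨hKv, hnav⟩ := hchooseK v h1v
        obtain ⟨hKw, hnaw⟩ := hchooseK w h1w
        have hkeq : h1v.choose = h1w.choose := hidxinj _ hKv _ hKw heq
        set k := h1v.choose with hkdef
        -- build a clique of size ω+1 : {v, w} ∪ (K ∖ {k})
        have hvKu : ∀ u ∈ K, u ≠ k → G.Adj v u := by
          intro u hu hne
          refine hAK v u hu ?_ (fun h => hv (h ▸ hu))
          rw [h1v.choose_spec]
          simpa using hne
        have hwKu : ∀ u ∈ K, u ≠ k → G.Adj w u := by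
          intro u hu hne
          refine hAK w u hu ?_ (fun h => hw (h ▸ hu))
          rw [h1w.choose_spec]
          rw [← hkeq] at *
          simpa using hne
        have hkK : k ∈ K := hKv
        have hcl : G.IsClique (insert v (insert w ((K.erase k) : Set V))) := by
          have h0 : G.IsClique ((K.erase k : Finset V) : Set V) := by
            apply hKcl.subset
            intro u hu
            simp only [Finset.coe_erase, Set.mem_diff] at hu
            exact hu.1
          have h1 : G.IsClique (insert w ((K.erase k : Finset V) : Set V)) := by
            apply h0.insert
            intro b hb _
            simp only [Finset.coe_erase, Set.mem_diff, Set.mem_singleton_iff] at hb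
            exact (hwKu b hb.1 hb.2).symm |>.symm
          apply h1.insert
          intro b hb hbne
          rcases hb with rfl | hb
          · exact hadj
          · simp only [Finset.coe_erase, Set.mem_diff, Set.mem_singleton_iff] at hb
            exact hvKu b hb.1 hb.2
        have hwne : w ∉ K.erase k := fun h => hw (Finset.mem_erase.1 h).2
        have hvne : v ∉ insert w (K.erase k) := by
          intro h
          rcases Finset.mem_insert.1 h with h | h
          · exact hvw h
          · exact hv (Finset.mem_erase.1 h).2
        have hle : (insert v (insert w (K.erase k))).card ≤ ω := by
          apply cliq_le
          rw [Finset.coe_insert, Finset.coe_insert]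
          exact hcl
        rw [Finset.card_insert_of_notMem hvne, Finset.card_insert_of_notMem hwne,
          Finset.card_erase_of_mem hkK, hKcard] at hle
        have hpos : 0 < K.card := Finset.card_pos.2 ⟨k, hkK⟩
        omega
      · rw [hcolT v hv h1v, hcolS w hw h1w]
        exact Nat.ne_of_lt (hidxlt _ (hchooseK v h1v).1)
    · by_cases h1w : ∃ k, A w = {k}
      · rw [hcolS v hv h1v, hcolT w hw h1w]
        exact (Nat.ne_of_lt (hidxlt _ (hchooseK w h1w).1)).symm
      · exfalso
        have h2v : 1 < (A v).card := by
          have hp := Finset.card_pos.2 (hAne v hv)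
          have hne1 : (A v).card ≠ 1 := fun h => h1v (Finset.card_eq_one.1 h)
          omega
        have h2w : 1 < (A w).card := by
          have hp := Finset.card_pos.2 (hAne w hw)
          have hne1 : (A w).card ≠ 1 := fun h => h1w (Finset.card_eq_one.1 h)
          omega
        rcases hnest with hsub | hsub
        · obtain ⟨k, hk, k', hk', hne⟩ := Finset.one_lt_card.1 h2v
          exact hne (hint k hk (hsub hk) k' hk' (hsub hk'))
        · obtain ⟨k, hk, k', hk', hne⟩ := Finset.one_lt_card.1 h2w
          exact hne (hint k (hsub hk) hk k' (hsub hk') hk')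
  have proper : ∀ v w, G.Adj v w → color v ≠ color w := by
    intro v w hadj
    by_cases hv : v ∈ K <;> by_cases hw : w ∈ K
    · rw [hcolK v hv, hcolK w hw]
      intro h
      exact hadj.ne (hidxinj v hv w hw h)
    · exact keyKT v w hadj hv hw
    · exact (keyKT w v hadj.symm hw hv).symm
    · exact keyOut v w hadj hv hw
  exact ⟨Coloring.mk (fun v => ⟨color v, hbound v⟩)
    (fun {v w} hadj h => proper v w hadj (by simpa using congrArg Fin.val h))⟩


-- cluster lemma: common neighborhoods of the nonadjacent pair (d2,d4) are P3-free
lemma Xcluster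
    (hW : ∀ ⦃a b c d e : V⦄, G.Adj a b → G.Adj b c → G.Adj c d → G.Adj d a →
      a ≠ c → b ≠ d → ¬G.Adj a c → ¬G.Adj b d →
      G.Adj e a → G.Adj e b → G.Adj e c → G.Adj e d → False)
    {d2 d4 x y z : V} (hne24 : d2 ≠ d4) (n24 : ¬G.Adj d2 d4)
    (hx2 : G.Adj x d2) (hx4 : G.Adj x d4) (hy2 : G.Adj y d2) (hy4 : G.Adj y d4)
    (hz2 : G.Adj z d2) (hz4 : G.Adj z d4)
    (hxy : x ≠ y) (nxy : ¬G.Adj x y) (hzx : G.Adj z x) (hzy : G.Adj z y) : False :=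
  hW hx2 hy2.symm hy4 hx4.symm hxy hne24 nxy n24 hzx hz2 hzy hz4

-- no vertex is adjacent to all four vertices of an induced C4
lemma noHub
    (hW : ∀ ⦃a b c d e : V⦄, G.Adj a b → G.Adj b c → G.Adj c d → G.Adj d a →
      a ≠ c → b ≠ d → ¬G.Adj a c → ¬G.Adj b d →
      G.Adj e a → G.Adj e b → G.Adj e c → G.Adj e d → False)
    {d1 d2 d3 d4 v : V}
    (a12 : G.Adj d1 d2) (a23 : G.Adj d2 d3) (a34 : G.Adj d3 d4) (a41 : G.Adj d4 d1)
    (n13 : ¬G.Adj d1 d3) (n24 : ¬G.Adj d2 d4) (hne13 : d1 ≠ d3) (hne24 : d2 ≠ d4)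
    (h1 : G.Adj v d1) (h2 : G.Adj v d2) (h3 : G.Adj v d3) (h4 : G.Adj v d4) : False :=
  hW a12 a23 a34 a41 hne13 hne24 n13 n24 h1 h2 h3 h4

-- homogeneity: two adjacent common neighbors of (d2,d4), one seeing d1 and other seeing d3
lemma XhomogFalse
    (hW : ∀ ⦃a b c d e : V⦄, G.Adj a b → G.Adj b c → G.Adj c d → G.Adj d a →
      a ≠ c → b ≠ d → ¬G.Adj a c → ¬G.Adj b d →
      G.Adj e a → G.Adj e b → G.Adj e c → G.Adj e d → False)
    {d1 d2 d3 d4 x x' : V}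
    (a12 : G.Adj d1 d2) (a23 : G.Adj d2 d3) (a34 : G.Adj d3 d4) (a41 : G.Adj d4 d1)
    (n13 : ¬G.Adj d1 d3) (n24 : ¬G.Adj d2 d4) (hne24 : d2 ≠ d4)
    (hx2 : G.Adj x d2) (hx4 : G.Adj x d4) (hxno : ¬(G.Adj x d1 ∧ G.Adj x d3))
    (hx'2 : G.Adj x' d2) (hx'4 : G.Adj x' d4) (hx'no : ¬(G.Adj x' d1 ∧ G.Adj x' d3))
    (hadj : G.Adj x x') (hx1 : G.Adj x d1) (hx'3 : G.Adj x' d3) : False := by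
  have hxn3 : ¬ G.Adj x d3 := fun h => hxno ⟨hx1, h⟩
  have hx'n1 : ¬ G.Adj x' d1 := fun h => hx'no ⟨h, hx'3⟩
  have hx'ne1 : x' ≠ d1 := fun h => n13 (h ▸ hx'3)
  -- C4 : x' - d2 - d1 - d4 - x' , hub x
  exact hW hx'2 a12.symm a41.symm hx'4.symm hx'ne1 hne24 hx'n1 n24
    hadj hx2 hx1 hx4

lemma caseII [Fintype V] (G : SimpleGraph V)
    (h2 : ∀ ⦃a b c d : V⦄, G.Adj a b → G.Adj c d → a ≠ c → a ≠ d → b ≠ c → b ≠ d →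
      ¬G.Adj a c → ¬G.Adj a d → ¬G.Adj b c → ¬G.Adj b d → False)
    (hW : ∀ ⦃a b c d e : V⦄, G.Adj a b → G.Adj b c → G.Adj c d → G.Adj d a →
      a ≠ c → b ≠ d → ¬G.Adj a c → ¬G.Adj b d →
      G.Adj e a → G.Adj e b → G.Adj e c → G.Adj e d → False)
    {d1 d2 d3 d4 : V}
    (a12 : G.Adj d1 d2) (a23 : G.Adj d2 d3) (a34 : G.Adj d3 d4) (a41 : G.Adj d4 d1)
    (n13 : ¬G.Adj d1 d3) (n24 : ¬G.Adj d2 d4) (hne13 : d1 ≠ d3) (hne24 : d2 ≠ d4) :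
    G.Colorable (G.cliqueNum + 5) := by
  classical
  letI : LinearOrder V := LinearOrder.lift' (Fintype.equivFin V) (Fintype.equivFin V).injective
  set ω := G.cliqueNum with hω
  have cliq_le : ∀ (s : Finset V), G.IsClique (s : Set V) → s.card ≤ ω :=
    fun s hs => SimpleGraph.IsClique.card_le_cliqueNum (tc := hs)
  -- the X and Y predicates
  let Xp : V → Prop := fun v => G.Adj v d2 ∧ G.Adj v d4 ∧ ¬(G.Adj v d1 ∧ G.Adj v d3)
  let Yp : V → Prop := fun v => G.Adj v d1 ∧ G.Adj v d3 ∧ ¬(G.Adj v d2 ∧ G.Adj v d4)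
  have hXY : ∀ v, Xp v → Yp v → False := by
    rintro v ⟨h2', h4', _⟩ ⟨h1', h3', _⟩
    exact noHub hW a12 a23 a34 a41 n13 n24 hne13 hne24 h1' h2' h3' h4'
  have hXYne : ∀ v w, Xp v → Yp w → v ≠ w := by
    rintro v w hv hw rfl; exact hXY v hv hw
  -- cluster property inside X and Y
  have hXcl : ∀ x y z, Xp x → Xp y → Xp z → x ≠ y → G.Adj z x → G.Adj z y → G.Adj x y := by
    intro x y z hx hy hz hxy hzx hzy
    by_contra hn
    exact Xcluster hW hne24 n24 hx.1 hx.2.1 hy.1 hy.2.1 hz.1 hz.2.1 hxy hn hzx hzy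
  have hYcl : ∀ x y z, Yp x → Yp y → Yp z → x ≠ y → G.Adj z x → G.Adj z y → G.Adj x y := by
    intro x y z hx hy hz hxy hzx hzy
    by_contra hn
    exact Xcluster hW hne13 n13 hx.1 hx.2.1 hy.1 hy.2.1 hz.1 hz.2.1 hxy hn hzx hzy
  -- Finset versions
  let Xs : Finset V := Finset.univ.filter Xp
  let Ys : Finset V := Finset.univ.filter Yp
  have hXsmem : ∀ v, v ∈ Xs ↔ Xp v := by intro v; simp [Xs]
  have hYsmem : ∀ v, v ∈ Ys ↔ Yp v := by intro v; simp [Ys]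
  -- max clique sizes inside X and Y
  let CX : Finset (Finset V) := Finset.univ.filter (fun Q => Q ⊆ Xs ∧ G.IsClique (Q : Set V))
  let CY : Finset (Finset V) := Finset.univ.filter (fun Q => Q ⊆ Ys ∧ G.IsClique (Q : Set V))
  let px : ℕ := CX.sup Finset.card
  let qy : ℕ := CY.sup Finset.card
  have hCXne : CX.Nonempty := ⟨∅, by simp [CX]⟩
  have hCYne : CY.Nonempty := ⟨∅, by simp [CY]⟩
  have hpxle : ∀ Q : Finset V, Q ⊆ Xs → G.IsClique (Q : Set V) → Q.card ≤ px := by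
    intro Q hsub hcl
    exact Finset.le_sup (Finset.mem_filter.2 ⟨Finset.mem_univ _, hsub, hcl⟩)
  have hqyle : ∀ Q : Finset V, Q ⊆ Ys → G.IsClique (Q : Set V) → Q.card ≤ qy := by
    intro Q hsub hcl
    exact Finset.le_sup (Finset.mem_filter.2 ⟨Finset.mem_univ _, hsub, hcl⟩)
  -- ranks
  let rX : V → ℕ := fun v => (Xs.filter (fun u => G.Adj u v ∧ u < v)).card
  let rY : V → ℕ := fun v => (Ys.filter (fun u => G.Adj u v ∧ u < v)).card
  have hrXlt : ∀ v, Xp v → rX v < px := by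
    intro v hv
    have hins : insert v (Xs.filter (fun u => G.Adj u v ∧ u < v)) ⊆ Xs := by
      intro u hu
      rcases Finset.mem_insert.1 hu with rfl | hu
      · exact (hXsmem u).2 hv
      · exact (Finset.filter_subset _ _) hu
    have hcl : G.IsClique ((insert v (Xs.filter (fun u => G.Adj u v ∧ u < v)) : Finset V) : Set V) := by
      intro a ha b hb hne
      simp only [Finset.coe_insert, Set.mem_insert_iff, Finset.mem_coe, Finset.mem_filter] at ha hb
      rcases ha with rfl | ⟨haX, haadj, _⟩
      · rcases hb with rfl | ⟨hbX, hbadj, _⟩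
        · exact absurd rfl hne
        · exact hbadj.symm
      · rcases hb with rfl | ⟨hbX, hbadj, _⟩
        · exact haadj
        · exact hXcl a b v ((hXsmem a).1 haX) ((hXsmem b).1 hbX) hv hne haadj.symm hbadj.symm
    have hle := hpxle _ hins hcl
    have hvnot : v ∉ Xs.filter (fun u => G.Adj u v ∧ u < v) := by
      intro h
      exact absurd (Finset.mem_filter.1 h).2.2 (lt_irrefl v)
    rw [Finset.card_insert_of_notMem hvnot] at hle
    simp only [rX]
    omega
  have hrYlt : ∀ v, Yp v → rY v < qy := by
    intro v hv
    have hins : insert v (Ys.filter (fun u => G.Adj u v ∧ u < v)) ⊆ Ys := by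
      intro u hu
      rcases Finset.mem_insert.1 hu with rfl | hu
      · exact (hYsmem u).2 hv
      · exact (Finset.filter_subset _ _) hu
    have hcl : G.IsClique ((insert v (Ys.filter (fun u => G.Adj u v ∧ u < v)) : Finset V) : Set V) := by
      intro a ha b hb hne
      simp only [Finset.coe_insert, Set.mem_insert_iff, Finset.mem_coe, Finset.mem_filter] at ha hb
      rcases ha with rfl | ⟨haX, haadj, _⟩
      · rcases hb with rfl | ⟨hbX, hbadj, _⟩
        · exact absurd rfl hne
        · exact hbadj.symm
      · rcases hb with rfl | ⟨hbX, hbadj, _⟩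
        · exact haadj
        · exact hYcl a b v ((hYsmem a).1 haX) ((hYsmem b).1 hbX) hv hne haadj.symm hbadj.symm
    have hle := hqyle _ hins hcl
    have hvnot : v ∉ Ys.filter (fun u => G.Adj u v ∧ u < v) := by
      intro h
      exact absurd (Finset.mem_filter.1 h).2.2 (lt_irrefl v)
    rw [Finset.card_insert_of_notMem hvnot] at hle
    simp only [rY]
    omega
  have hrXmono : ∀ u v, Xp u → Xp v → G.Adj u v → u < v → rX u < rX v := by
    intro u v hu hv hadj hlt
    apply Finset.card_lt_card
    rw [Finset.ssubset_iff_of_subset]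
    · refine ⟨u, Finset.mem_filter.2 ⟨(hXsmem u).2 hu, hadj, hlt⟩, ?_⟩
      intro h
      exact absurd (Finset.mem_filter.1 h).2.2 (lt_irrefl u)
    · intro w hw
      rw [Finset.mem_filter] at hw ⊢
      obtain ⟨hwX, hwadj, hwlt⟩ := hw
      have hwv : w ≠ v := ne_of_lt (hwlt.trans hlt)
      exact ⟨hwX, hXcl w v u ((hXsmem w).1 hwX) hv hu hwv hwadj.symm hadj, hwlt.trans hlt⟩
  have hrYmono : ∀ u v, Yp u → Yp v → G.Adj u v → u < v → rY u < rY v := by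
    intro u v hu hv hadj hlt
    apply Finset.card_lt_card
    rw [Finset.ssubset_iff_of_subset]
    · refine ⟨u, Finset.mem_filter.2 ⟨(hYsmem u).2 hu, hadj, hlt⟩, ?_⟩
      intro h
      exact absurd (Finset.mem_filter.1 h).2.2 (lt_irrefl u)
    · intro w hw
      rw [Finset.mem_filter] at hw ⊢
      obtain ⟨hwY, hwadj, hwlt⟩ := hw
      have hwv : w ≠ v := ne_of_lt (hwlt.trans hlt)
      exact ⟨hwY, hYcl w v u ((hYsmem w).1 hwY) hv hu hwv hwadj.symm hadj, hwlt.trans hlt⟩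
  -- THE KEY INEQUALITY
  have hkey : px + qy ≤ ω + 1 := by
    obtain ⟨QX, hQXmem, hpxeq⟩ := Finset.exists_mem_eq_sup CX hCXne Finset.card
    obtain ⟨QY, hQYmem, hqyeq⟩ := Finset.exists_mem_eq_sup CY hCYne Finset.card
    obtain ⟨-, hQXsub, hQXcl⟩ := Finset.mem_filter.1 hQXmem
    obtain ⟨-, hQYsub, hQYcl⟩ := Finset.mem_filter.1 hQYmem
    have hQXX : ∀ x ∈ QX, Xp x := fun x hx => (hXsmem x).1 (hQXsub hx)
    have hQYY : ∀ y ∈ QY, Yp y := fun y hy => (hYsmem y).1 (hQYsub hy)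
    have hdisj : Disjoint QX (QY : Finset V) := by
      rw [Finset.disjoint_left]
      intro a haX haY
      exact hXY a (hQXX a haX) (hQYY a haY)
    have hd1QY : d1 ∉ QY := fun h => ((hQYY d1 h).1).ne rfl
    have hqy1 : qy + 1 ≤ ω := by
      have hcl : G.IsClique ((insert d1 QY : Finset V) : Set V) := by
        rw [Finset.coe_insert]
        apply hQYcl.insert
        intro b hb hbne
        exact ((hQYY b hb).1).symm
      have hle := cliq_le _ hcl
      rw [Finset.card_insert_of_notMem hd1QY] at hle
      omega
    by_cases hp2 : px ≤ 2
    · omega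
    · push_neg at hp2
      -- homogeneity of QX with respect to {d1, d3}
      have hdd : (∀ x ∈ QX, ¬G.Adj x d1) ∨ (∀ x ∈ QX, ¬G.Adj x d3) := by
        by_contra hcon
        push_neg at hcon
        obtain ⟨⟨x, hx, hx1⟩, ⟨x', hx', hx'3⟩⟩ := hcon
        have hXx := hQXX x hx
        have hXx' := hQXX x' hx'
        have hxx' : x ≠ x' := by rintro rfl; exact hXx.2.2 ⟨hx1, hx'3⟩
        exact XhomogFalse hW a12 a23 a34 a41 n13 n24 hne24 hXx.1 hXx.2.1 hXx.2.2
          hXx'.1 hXx'.2.1 hXx'.2.2 (hQXcl hx hx' hxx') hx1 hx'3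
      -- homogeneity of QY with respect to {d2, d4} (rotated C4: d2 d3 d4 d1)
      have hod : (∀ y ∈ QY, ¬G.Adj y d2) ∨ (∀ y ∈ QY, ¬G.Adj y d4) := by
        by_contra hcon
        push_neg at hcon
        obtain ⟨⟨y, hy, hy2⟩, ⟨y', hy', hy'4⟩⟩ := hcon
        have hYy := hQYY y hy
        have hYy' := hQYY y' hy'
        have hyy' : y ≠ y' := by rintro rfl; exact hYy.2.2 ⟨hy2, hy'4⟩
        exact XhomogFalse hW a23 a34 a41 a12 n24 (fun h => n13 h.symm) hne13.symm
          hYy.2.1 hYy.1 hYy.2.2 hYy'.2.1 hYy'.1 hYy'.2.2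
          (hQYcl hy hy' hyy') hy2 hy'4
      -- every vertex of Y misses at most one vertex of QX
      have hM2X : ∀ y, Yp y → ∀ x ∈ QX, ∀ x' ∈ QX, x ≠ x' →
          ¬G.Adj x y → ¬G.Adj x' y → False := by
        intro y hy x hx x' hx' hne hnx hnx'
        have hadjxx' : G.Adj x x' := hQXcl hx hx' hne
        rcases hdd with hmiss | hmiss
        · have hxd : x ≠ d1 := fun h => hmiss x' hx' (h ▸ hadjxx').symm
          have hx'd : x' ≠ d1 := fun h => hmiss x hx (h ▸ hadjxx'.symm).symm
          exact h2 hadjxx' hy.1 (hXYne x y (hQXX x hx) hy) hxd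
            (hXYne x' y (hQXX x' hx') hy) hx'd hnx (hmiss x hx) hnx' (hmiss x' hx')
        · have hxd : x ≠ d3 := fun h => hmiss x' hx' (h ▸ hadjxx').symm
          have hx'd : x' ≠ d3 := fun h => hmiss x hx (h ▸ hadjxx'.symm).symm
          exact h2 hadjxx' hy.2.1 (hXYne x y (hQXX x hx) hy) hxd
            (hXYne x' y (hQXX x' hx') hy) hx'd hnx (hmiss x hx) hnx' (hmiss x' hx')
      -- every vertex of X misses at most one vertex of QY
      have hM2Y : ∀ x, Xp x → ∀ y ∈ QY, ∀ y' ∈ QY, y ≠ y' →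
          ¬G.Adj x y → ¬G.Adj x y' → False := by
        intro x hx y hy y' hy' hne hny hny'
        have hadjyy' : G.Adj y y' := hQYcl hy hy' hne
        have hYy := hQYY y hy
        have hYy' := hQYY y' hy'
        rcases hod with hmiss | hmiss
        · have hyd : y ≠ d2 := fun h => hmiss y' hy' (h ▸ hadjyy').symm
          have hy'd : y' ≠ d2 := fun h => hmiss y hy (h ▸ hadjyy'.symm).symm
          exact h2 hadjyy' hx.1 (hXYne x y hx hYy).symm hyd
            (hXYne x y' hx hYy').symm hy'd (fun h => hny h.symm) (hmiss y hy)
            (fun h => hny' h.symm) (hmiss y' hy')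
        · have hyd : y ≠ d4 := fun h => hmiss y' hy' (h ▸ hadjyy').symm
          have hy'd : y' ≠ d4 := fun h => hmiss y hy (h ▸ hadjyy'.symm).symm
          exact h2 hadjyy' hx.2.1 (hXYne x y hx hYy).symm hyd
            (hXYne x y' hx hYy').symm hy'd (fun h => hny h.symm) (hmiss y hy)
            (fun h => hny' h.symm) (hmiss y' hy')
      -- two "disjoint" non-edges between QX and QY are impossible
      have hpair : ∀ x1 ∈ QX, ∀ x2 ∈ QX, ∀ y1 ∈ QY, ∀ y2 ∈ QY, x1 ≠ x2 → y1 ≠ y2 →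
          ¬G.Adj x1 y1 → ¬G.Adj x2 y2 → False := by
        intro x1 hx1 x2 hx2 y1 hy1 y2 hy2 hx12 hy12 hn1 hn2
        have hady2 : G.Adj x1 y2 := by
          by_contra h
          exact hM2Y x1 (hQXX x1 hx1) y1 hy1 y2 hy2 hy12 hn1 h
        have hady1 : G.Adj x2 y1 := by
          by_contra h
          exact hM2X y1 (hQYY y1 hy1) x1 hx1 x2 hx2 hx12 hn1 h
        have hx3ex : ∃ x3 ∈ QX, x3 ≠ x1 ∧ x3 ≠ x2 := by
          by_contra h
          push_neg at h
          have hsub : QX ⊆ insert x1 {x2} := by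
            intro u hu
            rcases eq_or_ne u x1 with rfl | hune
            · exact Finset.mem_insert_self _ _
            · rw [h u hu hune]
              exact Finset.mem_insert.2 (Or.inr (Finset.mem_singleton_self _))
          have hc := Finset.card_le_card hsub
          have : (insert x1 ({x2} : Finset V)).card ≤ 2 := Finset.card_insert_le _ _
          omega
        obtain ⟨x3, hx3, hne31, hne32⟩ := hx3ex
        have h31 : G.Adj x3 y1 := by
          by_contra h
          exact hM2X y1 (hQYY y1 hy1) x1 hx1 x3 hx3 (Ne.symm hne31) hn1 h
        have h32 : G.Adj x3 y2 := by
          by_contra h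
          exact hM2X y2 (hQYY y2 hy2) x2 hx2 x3 hx3 (Ne.symm hne32) hn2 h
        -- W4 : induced C4 (x1, y2, y1, x2) with hub x3
        exact hW hady2 (hQYcl hy2 hy1 hy12.symm) hady1.symm (hQXcl hx2 hx1 hx12.symm)
          (hXYne x1 y1 (hQXX x1 hx1) (hQYY y1 hy1))
          (hXYne x2 y2 (hQXX x2 hx2) (hQYY y2 hy2)).symm
          hn1 (fun h => hn2 h.symm)
          (hQXcl hx3 hx1 hne31) h32 h31 (hQXcl hx3 hx2 hne32)
      -- conclude
      by_cases hex : ∃ x ∈ QX, ∃ y ∈ QY, ¬G.Adj x y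
      · obtain ⟨x1, hx1, y1, hy1, hn1⟩ := hex
        by_cases hally : ∀ x ∈ QX, ∀ y ∈ QY, ¬G.Adj x y → y = y1
        · -- QX ∪ (QY erase y1) is a clique
          have hcl : G.IsClique ((QX ∪ QY.erase y1 : Finset V) : Set V) := by
            intro a ha b hb hne
            rw [Finset.coe_union, Set.mem_union] at ha hb
            have hcross : ∀ u w, u ∈ QX → w ∈ (QY.erase y1 : Finset V) → G.Adj u w := by
              intro u w hu hw
              by_contra h
              exact (Finset.mem_erase.1 hw).1 (hally u hu w (Finset.mem_of_mem_erase hw) h)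
            rcases ha with ha | ha <;> rcases hb with hb | hb
            · exact hQXcl ha hb hne
            · exact hcross a b ha hb
            · exact (hcross b a hb ha).symm
            · exact hQYcl (Finset.mem_of_mem_erase ha) (Finset.mem_of_mem_erase hb) hne
          have hdisj' : Disjoint QX (QY.erase y1) :=
            hdisj.mono_right (Finset.erase_subset _ _)
          have hle := cliq_le _ hcl
          rw [Finset.card_union_of_disjoint hdisj', Finset.card_erase_of_mem hy1] at hle
          have hy1pos : 0 < QY.card := Finset.card_pos.2 ⟨y1, hy1⟩
          omega
        · push_neg at hally
          obtain ⟨x2, hx2, y2, hy2, hn2, hy21⟩ := hally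
          have hx21 : x2 = x1 := by
            by_contra h
            exact hpair x1 hx1 x2 hx2 y1 hy1 y2 hy2 (Ne.symm h) (Ne.symm hy21) hn1 hn2
          subst hx21
          have hallx : ∀ x ∈ QX, ∀ y ∈ QY, ¬G.Adj x y → x = x2 := by
            intro x hx y hy hn
            by_contra hxx1
            by_cases hyy2 : y = y2
            · exact hpair x hx x2 hx1 y hy y1 hy1 hxx1 (by rw [hyy2]; exact hy21) hn hn1
            · exact hpair x hx x2 hx1 y hy y2 hy2 hxx1 hyy2 hn hn2
          have hcl : G.IsClique ((QX.erase x2 ∪ QY : Finset V) : Set V) := by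
            intro a ha b hb hne
            rw [Finset.coe_union, Set.mem_union] at ha hb
            have hcross : ∀ u w, u ∈ (QX.erase x2 : Finset V) → w ∈ QY → G.Adj u w := by
              intro u w hu hw
              by_contra h
              exact (Finset.mem_erase.1 hu).1 (hallx u (Finset.mem_of_mem_erase hu) w hw h)
            rcases ha with ha | ha <;> rcases hb with hb | hb
            · exact hQXcl (Finset.mem_of_mem_erase ha) (Finset.mem_of_mem_erase hb) hne
            · exact hcross a b ha hb
            · exact (hcross b a hb ha).symm
            · exact hQYcl ha hb hne
          have hdisj' : Disjoint (QX.erase x2) QY :=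
            hdisj.mono_left (Finset.erase_subset _ _)
          have hle := cliq_le _ hcl
          rw [Finset.card_union_of_disjoint hdisj', Finset.card_erase_of_mem hx1] at hle
          have hx1pos : 0 < QX.card := Finset.card_pos.2 ⟨x2, hx1⟩
          omega
      · push_neg at hex
        have hcl : G.IsClique ((QX ∪ QY : Finset V) : Set V) := by
          intro a ha b hb hne
          rw [Finset.coe_union, Set.mem_union] at ha hb
          rcases ha with ha | ha <;> rcases hb with hb | hb
          · exact hQXcl ha hb hne
          · exact hex a ha b hb
          · exact (hex b hb a ha).symm
          · exact hQYcl ha hb hne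
        have hle := cliq_le _ hcl
        rw [Finset.card_union_of_disjoint hdisj] at hle
        omega
  -- the Z predicates
  let Z12 : V → Prop := fun v => ¬G.Adj v d1 ∧ ¬G.Adj v d2
  let Z14 : V → Prop := fun v => ¬G.Adj v d1 ∧ ¬G.Adj v d4
  let Z32 : V → Prop := fun v => ¬G.Adj v d3 ∧ ¬G.Adj v d2
  let Z34 : V → Prop := fun v => ¬G.Adj v d3 ∧ ¬G.Adj v d4
  have hcover : ∀ v, Xp v ∨ Yp v ∨ Z12 v ∨ Z14 v ∨ Z32 v ∨ Z34 v := by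
    intro v
    by_cases h24 : G.Adj v d2 ∧ G.Adj v d4
    · by_cases h13 : G.Adj v d1 ∧ G.Adj v d3
      · exact absurd (noHub hW a12 a23 a34 a41 n13 n24 hne13 hne24 h13.1 h24.1 h13.2 h24.2) id
      · exact Or.inl ⟨h24.1, h24.2, h13⟩
    · by_cases h13 : G.Adj v d1 ∧ G.Adj v d3
      · exact Or.inr (Or.inl ⟨h13.1, h13.2, h24⟩)
      · push_neg at h24 h13
        by_cases hv1 : G.Adj v d1
        · by_cases hv2 : G.Adj v d2
          · exact Or.inr (Or.inr (Or.inr (Or.inr (Or.inr ⟨h13 hv1, h24 hv2⟩))))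
          · exact Or.inr (Or.inr (Or.inr (Or.inr (Or.inl ⟨h13 hv1, hv2⟩))))
        · by_cases hv2 : G.Adj v d2
          · exact Or.inr (Or.inr (Or.inr (Or.inl ⟨hv1, h24 hv2⟩)))
          · exact Or.inr (Or.inr (Or.inl ⟨hv1, hv2⟩))
  -- independence of the Z cells
  have hZind : ∀ (da db : V), G.Adj da db →
      ∀ v w, ¬G.Adj v da ∧ ¬G.Adj v db → ¬G.Adj w da ∧ ¬G.Adj w db → G.Adj v w → False := by
    intro da db hab v w hv hw hadj
    have hvda : v ≠ da := fun h => hv.2 (h ▸ hab)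
    have hvdb : v ≠ db := fun h => hv.1 (h ▸ hab.symm)
    have hwda : w ≠ da := fun h => hw.2 (h ▸ hab)
    have hwdb : w ≠ db := fun h => hw.1 (h ▸ hab.symm)
    exact h2 hadj hab hvda hvdb hwda hwdb hv.1 hv.2 hw.1 hw.2
  -- the coloring function
  let colorN : V → ℕ := fun v =>
    if Xp v then rX v
    else if Yp v then px + rY v
    else if Z12 v then px + qy
    else if Z14 v then px + qy + 1
    else if Z32 v then px + qy + 2
    else px + qy + 3
  have hcX : ∀ v, Xp v → colorN v = rX v := fun v hv => by simp only [colorN, if_pos hv]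
  have hcY : ∀ v, ¬Xp v → Yp v → colorN v = px + rY v := fun v hnv hv => by
    simp only [colorN, if_neg hnv, if_pos hv]
  have hcZ : ∀ v, ¬Xp v → ¬Yp v → px + qy ≤ colorN v ∧ colorN v ≤ px + qy + 3 := by
    intro v h1' h2'
    simp only [colorN, if_neg h1', if_neg h2']
    split_ifs <;> omega
  -- bound
  have hbound : ∀ v, colorN v < ω + 5 := by
    intro v
    by_cases hx : Xp v
    · rw [hcX v hx]
      have := hrXlt v hx
      have : px ≤ px + qy := Nat.le_add_right _ _
      omega
    · by_cases hy : Yp v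
      · rw [hcY v hx hy]
        have := hrYlt v hy
        omega
      · have := hcZ v hx hy
        omega
  
  have hcz12 : ∀ v, ¬Xp v → ¬Yp v → Z12 v → colorN v = px + qy := fun v h1' h2' h3' => by
    simp only [colorN, if_neg h1', if_neg h2', if_pos h3']
  have hcz14 : ∀ v, ¬Xp v → ¬Yp v → ¬Z12 v → Z14 v → colorN v = px + qy + 1 :=
    fun v h1' h2' h3' h4' => by
      simp only [colorN, if_neg h1', if_neg h2', if_neg h3', if_pos h4']
  have hcz32 : ∀ v, ¬Xp v → ¬Yp v → ¬Z12 v → ¬Z14 v → Z32 v → colorN v = px + qy + 2 :=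
    fun v h1' h2' h3' h4' h5' => by
      simp only [colorN, if_neg h1', if_neg h2', if_neg h3', if_neg h4', if_pos h5']
  have hcz34 : ∀ v, ¬Xp v → ¬Yp v → ¬Z12 v → ¬Z14 v → ¬Z32 v → colorN v = px + qy + 3 :=
    fun v h1' h2' h3' h4' h5' => by
      simp only [colorN, if_neg h1', if_neg h2', if_neg h3', if_neg h4', if_neg h5']
  have hz34 : ∀ v, ¬Xp v → ¬Yp v → ¬Z12 v → ¬Z14 v → ¬Z32 v → Z34 v := by
    intro v h1' h2' h3' h4' h5'
    rcases hcover v with h|h|h|h|h|h <;> first | exact h | (exfalso ; tauto)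
  have properZ : ∀ v w, G.Adj v w → ¬Xp v → ¬Yp v → ¬Xp w → ¬Yp w →
      colorN v ≠ colorN w := by
    intro v w hadj hxv hyv hxw hyw
    have a14 : G.Adj d1 d4 := a41.symm
    have a32 : G.Adj d3 d2 := a23.symm
    by_cases z1v : Z12 v <;> by_cases z1w : Z12 w
    · exact absurd (hZind d1 d2 a12 v w z1v z1w hadj) id
    · rw [hcz12 v hxv hyv z1v]
      by_cases z2w : Z14 w
      · rw [hcz14 w hxw hyw z1w z2w]; omega
      · by_cases z3w : Z32 w
        · rw [hcz32 w hxw hyw z1w z2w z3w]; omega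
        · rw [hcz34 w hxw hyw z1w z2w z3w]; omega
    · rw [hcz12 w hxw hyw z1w]
      by_cases z2v : Z14 v
      · rw [hcz14 v hxv hyv z1v z2v]; omega
      · by_cases z3v : Z32 v
        · rw [hcz32 v hxv hyv z1v z2v z3v]; omega
        · rw [hcz34 v hxv hyv z1v z2v z3v]; omega
    · by_cases z2v : Z14 v <;> by_cases z2w : Z14 w
      · exact absurd (hZind d1 d4 a14 v w z2v z2w hadj) id
      · rw [hcz14 v hxv hyv z1v z2v]
        by_cases z3w : Z32 w
        · rw [hcz32 w hxw hyw z1w z2w z3w]; omega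
        · rw [hcz34 w hxw hyw z1w z2w z3w]; omega
      · rw [hcz14 w hxw hyw z1w z2w]
        by_cases z3v : Z32 v
        · rw [hcz32 v hxv hyv z1v z2v z3v]; omega
        · rw [hcz34 v hxv hyv z1v z2v z3v]; omega
      · by_cases z3v : Z32 v <;> by_cases z3w : Z32 w
        · exact absurd (hZind d3 d2 a32 v w z3v z3w hadj) id
        · rw [hcz32 v hxv hyv z1v z2v z3v, hcz34 w hxw hyw z1w z2w z3w]; omega
        · rw [hcz34 v hxv hyv z1v z2v z3v, hcz32 w hxw hyw z1w z2w z3w]; omega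
        · exact absurd (hZind d3 d4 a34 v w (hz34 v hxv hyv z1v z2v z3v)
            (hz34 w hxw hyw z1w z2w z3w) hadj) id
  have properXrest : ∀ v w, ¬Xp w → Xp v → colorN v ≠ colorN w := by
    intro v w hxw hxv
    have h1' : colorN v < px := by rw [hcX v hxv]; exact hrXlt v hxv
    have h2' : px ≤ colorN w := by
      by_cases hyw : Yp w
      · rw [hcY w hxw hyw]; omega
      · have := (hcZ w hxw hyw).1; omega
    omega
  have properYZ : ∀ v w, ¬Xp v → Yp v → ¬Xp w → ¬Yp w → colorN v ≠ colorN w := by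
    intro v w hxv hyv hxw hyw
    have h1' : colorN v < px + qy := by
      rw [hcY v hxv hyv]
      have := hrYlt v hyv
      omega
    have h2' := (hcZ w hxw hyw).1
    omega
  have proper : ∀ v w, G.Adj v w → colorN v ≠ colorN w := by
    intro v w hadj
    by_cases hxv : Xp v <;> by_cases hxw : Xp w
    · rw [hcX v hxv, hcX w hxw]
      rcases lt_trichotomy v w with h | h | h
      · exact Nat.ne_of_lt (hrXmono v w hxv hxw hadj h)
      · exact absurd h hadj.ne
      · exact (Nat.ne_of_lt (hrXmono w v hxw hxv hadj.symm h)).symm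
    · exact properXrest v w hxw hxv
    · exact (properXrest w v hxv hxw).symm
    · by_cases hyv : Yp v <;> by_cases hyw : Yp w
      · rw [hcY v hxv hyv, hcY w hxw hyw]
        rcases lt_trichotomy v w with h | h | h
        · have := hrYmono v w hyv hyw hadj h; omega
        · exact absurd h hadj.ne
        · have := hrYmono w v hyw hyv hadj.symm h; omega
      · exact properYZ v w hxv hyv hxw hyw
      · exact (properYZ w v hxw hyw hxv hyv).symm
      · exact properZ v w hadj hxv hyv hxw hyw
  exact ⟨Coloring.mk (fun v => ⟨colorN v, hbound v⟩)
    (fun {v w} hadj h => proper v w hadj (by simpa using congrArg Fin.val h))⟩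

end Stmt3Aux

/-- Every `(2K₂, K₁ + C₄)`-free graph `G` satisfies `χ(G) ≤ ω(G) + 5`. -/
theorem stmt3 {V : Type*} [Fintype V] (G : SimpleGraph V)
    (h1 : IndFree graph2K2 G) (h2 : IndFree graphWheel G) :
    G.chromaticNumber ≤ ((G.cliqueNum + 5 : ℕ) : ℕ∞) := by
  classical
  by_cases hC4 : ∃ a b c d : V, G.Adj a b ∧ G.Adj b c ∧ G.Adj c d ∧ G.Adj d a ∧
      a ≠ c ∧ b ≠ d ∧ ¬G.Adj a c ∧ ¬G.Adj b d
  · obtain ⟨a, b, c, d, hab, hbc, hcd, hda, hac, hbd, nac, nbd⟩ := hC4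
    have hcol := caseII G (no2K2_s3 h1) (noW4 h2) hab hbc hcd hda nac nbd hac hbd
    refine (hcol.chromaticNumber_le).trans ?_
    norm_num
  · have hC4' : ∀ ⦃a b c d : V⦄, G.Adj a b → G.Adj b c → G.Adj c d → G.Adj d a →
        a ≠ c → b ≠ d → G.Adj a c ∨ G.Adj b d := by
      intro a b c d hab hbc hcd hda hac hbd
      by_contra h
      push_neg at h
      exact hC4 ⟨a, b, c, d, hab, hbc, hcd, hda, hac, hbd, h.1, h.2⟩
    have hcol := psColorable G (no2K2_s3 h1) hC4'
    refine (hcol.chromaticNumber_le).trans ?_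
    rw [Nat.cast_le]
    omega
end
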